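/- arXiv:1401.0173 — 5 statements merged into one kernel-verified Lean document; each statement's English description precedes it below -/
import Mathlib

section
/- For every h ∈ ℕ, the Igusa function satisfies the functional equation I_h(Y^{−1}; X_1^{−1},…,X_h^{−1}) = (−1)^h · X_h · Y^{−h(h−1)/2} · I_h(Y; X_1,…,X_h) in the field of rational functions ℚ(Y,X_1,…,X_h). -/
noncomputable section

/-- The Gaussian binomial coefficient `binom(a,b)_Y`, as an element of a field,
evaluated at `Y`. -/
def gaussBinom {K : Type*} [Field K] (Y : K) (a b : ℕ) : K :=
  (∏ i ∈ Finset.Icc (a - b + 1) a, (1 - Y ^ i)) / ∏ i ∈ Finset.Icc 1 b, (1 - Y ^ i)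

def gaussMultinomAux {K : Type*} [Field K] (Y : K) : ℕ → List ℕ → K
  | _, [] => 1
  | n, i :: is => gaussBinom Y n i * gaussMultinomAux Y i is

/-- The Gaussian multinomial coefficient `binom(n, I)_Y`:
for `I = {i₁ < ⋯ < iₘ}`, this is `binom(n,iₘ)_Y · binom(iₘ,i_{m-1})_Y ⋯ binom(i₂,i₁)_Y`. -/
def gaussMultinom {K : Type*} [Field K] (Y : K) (n : ℕ) (I : Finset ℕ) : K :=
  gaussMultinomAux Y n ((I.sort (· ≤ ·)).reverse)

def multinomAux : ℕ → List ℕ → ℕ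
  | _, [] => 1
  | n, i :: is => n.choose i * multinomAux i is

/-- The ordinary multinomial coefficient `binom(n, I)`, the value of `binom(n,I)_Y` at `Y = 1`. -/
def multinom (n : ℕ) (I : Finset ℕ) : ℕ :=
  multinomAux n ((I.sort (· ≤ ·)).reverse)

/-- The Igusa function `I_h(Y; X_1, …, X_h)`. -/
def igusa {K : Type*} [Field K] (h : ℕ) (Y : K) (X : ℕ → K) : K :=
  (1 - X h)⁻¹ * ∑ I ∈ (Finset.Icc 1 (h - 1)).powerset,
    gaussMultinom Y h I * ∏ i ∈ I, X i / (1 - X i)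

/-- The Igusa function `I_h^∘(Y; X_1, …, X_h)`. -/
def igusaCirc {K : Type*} [Field K] (h : ℕ) (Y : K) (X : ℕ → K) : K :=
  X h * igusa h Y X

/-- The Igusa function at `Y = 1`, `I_h(1; X_1, …, X_h)`, with ordinary multinomials. -/
def igusaOne {K : Type*} [Field K] (h : ℕ) (X : ℕ → K) : K :=
  (1 - X h)⁻¹ * ∑ I ∈ (Finset.Icc 1 (h - 1)).powerset,
    (multinom h I : K) * ∏ i ∈ I, X i / (1 - X i)

/-- The chains (of arbitrary finite length, including the empty chain) of nonempty proper
subsets of `{1, …, h}`, encoded as finsets of subsets that are totally ordered by inclusion. -/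
def chainsOn (h : ℕ) : Finset (Finset (Finset ℕ)) :=
  ((Finset.Icc 1 h).powerset.filter
      (fun I => I ≠ ∅ ∧ I ≠ Finset.Icc 1 h)).powerset.filter
    (fun C => ∀ I ∈ C, ∀ J ∈ C, I ⊆ J ∨ J ⊆ I)

/-- The generalized Igusa function `I^wo_h((X_𝓘)_𝓘)`, with variables indexed by the
nonempty subsets of `{1, …, h}`. -/
def igusaWO {K : Type*} [Field K] (h : ℕ) (X : Finset ℕ → K) : K :=
  (1 - X (Finset.Icc 1 h))⁻¹ * ∑ C ∈ chainsOn h, ∏ I ∈ C, X I / (1 - X I)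

/-- The Igusa function `I_h(Y; X_1, …, X_h)` with power series arguments. -/
def igusaPS (h : ℕ) (Y : ℚ) (X : ℕ → PowerSeries ℚ) : PowerSeries ℚ :=
  (1 - X h)⁻¹ * ∑ I ∈ (Finset.Icc 1 (h - 1)).powerset,
    PowerSeries.C (gaussMultinom Y h I) * ∏ i ∈ I, X i * (1 - X i)⁻¹

/-- The Igusa function `I_h^∘(Y; X_1, …, X_h)` with power series arguments. -/
def igusaCircPS (h : ℕ) (Y : ℚ) (X : ℕ → PowerSeries ℚ) : PowerSeries ℚ :=
  X h * igusaPS h Y X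

/-- The Igusa function `I_h(1; X_1, …, X_h)` with power series arguments. -/
def igusaOnePS (h : ℕ) (X : ℕ → PowerSeries ℚ) : PowerSeries ℚ :=
  (1 - X h)⁻¹ * ∑ I ∈ (Finset.Icc 1 (h - 1)).powerset,
    (multinom h I : PowerSeries ℚ) * ∏ i ∈ I, X i * (1 - X i)⁻¹

/-- The generalized Igusa function `I^wo_h` with power series arguments. -/
def igusaWOPS (h : ℕ) (X : Finset ℕ → PowerSeries ℚ) : PowerSeries ℚ :=
  (1 - X (Finset.Icc 1 h))⁻¹ * ∑ C ∈ chainsOn h, ∏ I ∈ C, X I * (1 - X I)⁻¹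

/-- `lam` encodes a partition `λ_1 ≥ ⋯ ≥ λ_n ≥ 0` with at most `n` parts
(indexed from `1`; the irrelevant values `lam 0` and `lam j` for `j > n` are zero). -/
def IsPartition (n : ℕ) (lam : ℕ → ℕ) : Prop :=
  (∀ j, 1 ≤ j → lam (j + 1) ≤ lam j) ∧ ∀ j, j = 0 ∨ n < j → lam j = 0

/-- `ℓ` encodes an `n`-tuple of non-negative integers, indexed from `1`
(the irrelevant values at `0` and beyond `n` are zero). -/
def IsTuple (n : ℕ) (ℓ : ℕ → ℕ) : Prop :=
  ∀ j, j = 0 ∨ n < j → ℓ j = 0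

/-- The dual partition: `λ'_k = #{j ∈ {1,…,n} : λ_j ≥ k}`. -/
def dualPart (n : ℕ) (lam : ℕ → ℕ) (k : ℕ) : ℕ :=
  ((Finset.Icc 1 n).filter fun j => k ≤ lam j).card

/-- `α(λ, μ; p)`: the number of subgroups of `⊕_{k=1}^n ℤ/p^{λ_k}ℤ` that are isomorphic
to `⊕_{k=1}^n ℤ/p^{μ_k}ℤ`. -/
def alphaCount (p n : ℕ) (lam mu : ℕ → ℕ) : ℕ :=
  Nat.card {H : AddSubgroup ((j : Fin n) → ZMod (p ^ lam (j.1 + 1))) //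
    Nonempty (H ≃+ ((j : Fin n) → ZMod (p ^ mu (j.1 + 1))))}

/-- `β(λ)`: the number of `n`-tuples `ℓ ∈ ℕ₀ⁿ` whose non-increasing rearrangement is `λ`. -/
def betaCount (n : ℕ) (lam : ℕ → ℕ) : ℕ :=
  Nat.card {ℓ : Fin n → ℕ // ∃ σ : Equiv.Perm (Fin n), ∀ j, ℓ (σ j) = lam (j.1 + 1)}

/-- `(r, L, M)` are the parameters of a Dyck word of length `2n`:
`w = 0^{L_1}1^{M_1}0^{L_2-L_1}1^{M_2-M_1}⋯0^{L_r-L_{r-1}}1^{M_r-M_{r-1}}`. -/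
def DyckParams (n r : ℕ) (L M : ℕ → ℕ) : Prop :=
  1 ≤ r ∧ L 0 = 0 ∧ M 0 = 0 ∧ L r = n ∧ M r = n ∧
    ∀ i ∈ Finset.Icc 1 r, L (i - 1) < L i ∧ M (i - 1) < M i ∧ M i ≤ L i

/-- `w(μ, λ) = w` for the Dyck word `w` with parameters `(r, L, M)`:
`λ_{L_i} ≥ μ_{M_{i-1}+1}` for `i ∈ {1,…,r}` and `μ_{M_i} > λ_{L_i+1}` for `i ∈ {1,…,r-1}`. -/
def WMatch (r : ℕ) (L M : ℕ → ℕ) (mu lam : ℕ → ℕ) : Prop :=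
  (∀ i ∈ Finset.Icc 1 r, mu (M (i - 1) + 1) ≤ lam (L i)) ∧
    ∀ i ∈ Finset.Icc 1 (r - 1), lam (L i + 1) < mu (M i)

/-- `t_i = |𝒜_1| + ⋯ + |𝒜_i|` for an ordered set partition `𝒜`. -/
def tpar (𝒜 : ℕ → Finset ℕ) (i : ℕ) : ℕ :=
  ∑ k ∈ Finset.Icc 1 i, (𝒜 k).card

/-- The `j`-th smallest element of a finite set of naturals (`j` counted from `1`). -/
def sortedElt (A : Finset ℕ) (j : ℕ) : ℕ :=
  (A.sort (· ≤ ·)).getD (j - 1) 0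

/-- `ε^{(i)}(𝓘) = L_{i-1} + ∑_{j ∈ 𝓘} f_{a^{(i)}_j}`, where `a^{(i)}_1 < ⋯` are the
elements of `𝒜_i`. -/
def epsA (f L : ℕ → ℕ) (𝒜 : ℕ → Finset ℕ) (i : ℕ) (I : Finset ℕ) : ℕ :=
  L (i - 1) + ∑ j ∈ I, f (sortedElt (𝒜 i) j)

/-- The number of ideals of additive index `m` in the Heisenberg Lie ring `L(R) = R⊕R⊕R`
with bracket `[(a,b,c),(a',b',c')] = (0,0,ab'-a'b)`. -/
def heisenbergIdealCount (R : Type*) [CommRing R] (m : ℕ) : ℕ :=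
  Nat.card {I : AddSubgroup (R × R × R) //
    (∀ x ∈ I, ∀ y : R × R × R, (0, 0, y.1 * x.2.1 - x.1 * y.2.1) ∈ I) ∧ I.index = m}

/-- The explicit rational function `E^f_{w,𝒜}(X,Y)` attached to a Dyck word with parameters
`(r, L, M)` and a compatible ordered set partition `𝒜` of `{1,…,g}`. -/
def Efun {F : Type*} [Field F] (n r : ℕ) (f L M : ℕ → ℕ) (𝒜 : ℕ → Finset ℕ)
    (Xv Yv : F) : F :=
  (∏ i ∈ Finset.Icc 1 r, gaussBinom Xv⁻¹ (L i - M (i - 1)) (L i - M i)) *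
    (∏ i ∈ Finset.Icc 1 r, igusaWO (tpar 𝒜 i - tpar 𝒜 (i - 1))
      (fun I => Xv ^ ((2 * n - M (i - 1) + epsA f L 𝒜 i I) * M (i - 1)) *
        Yv ^ (2 * epsA f L 𝒜 i I + M (i - 1)))) *
    (∏ i ∈ Finset.Icc 1 (r - 1), igusaCirc (M i - M (i - 1)) Xv⁻¹
      (fun j => Xv ^ ((M (i - 1) + j) * (2 * n + L i - (M (i - 1) + j))) *
        Yv ^ (2 * L i + M (i - 1) + j))) *
    igusa (n - M (r - 1)) Xv⁻¹
      (fun j => Xv ^ ((M (r - 1) + j) * (2 * n + L r - (M (r - 1) + j))) *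
        Yv ^ (2 * L r + M (r - 1) + j))

/-- The power series `E^f_{w,𝒜}(p,t)`, the explicit rational function `E^f_{w,𝒜}`
evaluated at `X = p`, `Y = t` and expanded as a power series in `t`. -/
def EfunPS (p n r : ℕ) (f L M : ℕ → ℕ) (𝒜 : ℕ → Finset ℕ) : PowerSeries ℚ :=
  (∏ i ∈ Finset.Icc 1 r,
      PowerSeries.C (gaussBinom ((p : ℚ)⁻¹) (L i - M (i - 1)) (L i - M i))) *
    (∏ i ∈ Finset.Icc 1 r, igusaWOPS (tpar 𝒜 i - tpar 𝒜 (i - 1))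
      (fun I => PowerSeries.C ((p : ℚ) ^ ((2 * n - M (i - 1) + epsA f L 𝒜 i I) * M (i - 1))) *
        PowerSeries.X ^ (2 * epsA f L 𝒜 i I + M (i - 1)))) *
    (∏ i ∈ Finset.Icc 1 (r - 1), igusaCircPS (M i - M (i - 1)) ((p : ℚ)⁻¹)
      (fun j => PowerSeries.C ((p : ℚ) ^ ((M (i - 1) + j) * (2 * n + L i - (M (i - 1) + j)))) *
        PowerSeries.X ^ (2 * L i + M (i - 1) + j))) *
    igusaPS (n - M (r - 1)) ((p : ℚ)⁻¹)
      (fun j => PowerSeries.C ((p : ℚ) ^ ((M (r - 1) + j) * (2 * n + L r - (M (r - 1) + j)))) *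
        PowerSeries.X ^ (2 * L r + M (r - 1) + j))

/-- The set of canonical representatives `(r, L, M, 𝒜)` of all pairs consisting of
a Dyck word `w` of length `2n` and an ordered set partition `𝒜` of `{1,…,g}`
compatible with `w`. -/
def dyckPartData (g n : ℕ) (f : ℕ → ℕ) : Set (ℕ × (ℕ → ℕ) × (ℕ → ℕ) × (ℕ → Finset ℕ)) :=
  {d | DyckParams n d.1 d.2.1 d.2.2.1 ∧
    (∀ j, d.1 < j → d.2.1 j = n ∧ d.2.2.1 j = n) ∧
    (∀ i ∈ Finset.Icc 1 d.1, (d.2.2.2 i).Nonempty) ∧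
    (∀ i ∈ Finset.Icc 1 d.1, ∀ j ∈ Finset.Icc 1 d.1, i ≠ j → Disjoint (d.2.2.2 i) (d.2.2.2 j)) ∧
    (Finset.Icc 1 d.1).biUnion d.2.2.2 = Finset.Icc 1 g ∧
    (∀ i ∈ Finset.Icc 1 d.1, ∑ j ∈ d.2.2.2 i, f j = d.2.1 i - d.2.1 (i - 1)) ∧
    (∀ j, j = 0 ∨ d.1 < j → d.2.2.2 j = ∅)}

/-- The explicit rational function `W^f(X,Y)` expressing the local normal zeta function of
the Heisenberg group at an unramified prime with residue degrees `f_1, …, f_g`. -/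
def Wfun {F : Type*} [Field F] (g n : ℕ) (f : ℕ → ℕ) (Xv Yv : F) : F :=
  (∏ i ∈ Finset.Icc 1 g, (1 - Yv ^ (2 * f i))) *
    (∏ i ∈ Finset.range (2 * n), (1 - Xv ^ i * Yv)⁻¹) *
    ∑ᶠ d ∈ dyckPartData g n f, Efun n d.1 f d.2.1 d.2.2.1 d.2.2.2 Xv Yv
end
noncomputable section AuxFE
namespace IgusaFE

variable {K : Type*} [Field K]

def qfact (q : K) (n : ℕ) : K := ∏ i ∈ Finset.Icc 1 n, (1 - q ^ i)

variable {q : K}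

lemma qfact_ne_zero (hq : ∀ i : ℕ, 1 ≤ i → (1 : K) - q ^ i ≠ 0) (n : ℕ) : qfact q n ≠ 0 :=
  Finset.prod_ne_zero_iff.mpr fun i hi => hq i (Finset.mem_Icc.mp hi).1

lemma qfact_succ (q : K) (n : ℕ) : qfact q (n + 1) = qfact q n * (1 - q ^ (n + 1)) := by
  rw [qfact, qfact, Finset.prod_Icc_succ_top (Nat.le_add_left 1 n)]

lemma qfact_mul (q : K) (a b : ℕ) :
    qfact q (a + b) = qfact q a * ∏ i ∈ Finset.Ioc a (a + b), (1 - q ^ i) := by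
  rw [qfact, qfact, show Finset.Icc 1 (a + b) = Finset.Ioc 0 (a + b) from Finset.Icc_add_one_left_eq_Ioc 0 _,
    show Finset.Icc 1 a = Finset.Ioc 0 a from Finset.Icc_add_one_left_eq_Ioc 0 _,
    Finset.prod_Ioc_consecutive _ (Nat.zero_le a) (Nat.le_add_right a b)]

lemma gaussBinom_eq (hq : ∀ i : ℕ, 1 ≤ i → (1 : K) - q ^ i ≠ 0) {a b : ℕ} (h : b ≤ a) :
    gaussBinom q a b = qfact q a / (qfact q b * qfact q (a - b)) := by
  have h1 : Finset.Icc (a - b + 1) a = Finset.Ioc (a - b) a := Finset.Icc_add_one_left_eq_Ioc _ _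
  have h2 := qfact_mul q (a - b) b
  rw [show a - b + b = a from by omega] at h2
  have h3 : (∏ i ∈ Finset.Ioc (a - b) a, (1 - q ^ i)) = qfact q a / qfact q (a - b) := by
    rw [eq_div_iff (qfact_ne_zero hq _), h2]; ring
  rw [gaussBinom, h1, h3, show (∏ i ∈ Finset.Icc 1 b, (1 - q ^ i)) = qfact q b from rfl,
    div_div, mul_comm (qfact q (a - b)) (qfact q b)]

lemma gaussBinom_zero (q : K) (a : ℕ) : gaussBinom q a 0 = 1 := by
  rw [gaussBinom]
  rw [Finset.Icc_eq_empty (by omega), Finset.Icc_eq_empty (by omega)]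
  simp

lemma gaussBinom_self (hq : ∀ i : ℕ, 1 ≤ i → (1 : K) - q ^ i ≠ 0) (a : ℕ) :
    gaussBinom q a a = 1 := by
  rw [gaussBinom_eq hq le_rfl, Nat.sub_self]
  rw [show qfact q 0 = 1 from rfl, mul_one, div_self (qfact_ne_zero hq _)]

lemma gaussBinom_pascal (hq : ∀ i : ℕ, 1 ≤ i → (1 : K) - q ^ i ≠ 0) (u v : ℕ) :
    gaussBinom q (u + v + 2) (u + 1)
      = gaussBinom q (u + v + 1) u + q ^ (u + 1) * gaussBinom q (u + v + 1) (u + 1) := by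
  rw [gaussBinom_eq hq (by omega), gaussBinom_eq hq (by omega), gaussBinom_eq hq (by omega),
    show u + v + 2 - (u + 1) = v + 1 from by omega,
    show u + v + 1 - u = v + 1 from by omega,
    show u + v + 1 - (u + 1) = v from by omega,
    show u + v + 2 = (u + v + 1) + 1 from by omega,
    qfact_succ q (u + v + 1), qfact_succ q u, qfact_succ q v]
  have h1 := qfact_ne_zero hq u
  have h2 := qfact_ne_zero hq v
  have h3 := qfact_ne_zero hq (u + v + 1)
  have h4 := hq (u + 1) (by omega)
  have h5 := hq (v + 1) (by omega)
  field_simp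
  ring

lemma gaussBinom_mul_gaussBinom (hq : ∀ i : ℕ, 1 ≤ i → (1 : K) - q ^ i ≠ 0) (t x y : ℕ) :
    gaussBinom q (t + x + y) (t + x) * gaussBinom q (t + x) t
      = gaussBinom q (t + x + y) t * gaussBinom q (x + y) x := by
  rw [gaussBinom_eq hq (by omega), gaussBinom_eq hq (by omega), gaussBinom_eq hq (by omega),
    gaussBinom_eq hq (by omega),
    show t + x + y - (t + x) = y from by omega,
    show t + x - t = x from by omega,
    show t + x + y - t = x + y from by omega,
    show x + y - x = y from by omega]
  have h1 := qfact_ne_zero hq t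
  have h2 := qfact_ne_zero hq x
  have h3 := qfact_ne_zero hq y
  have h4 := qfact_ne_zero hq (t + x)
  have h5 := qfact_ne_zero hq (x + y)
  field_simp

end IgusaFE
end AuxFE
noncomputable section AuxFE2
namespace IgusaFE

variable {K : Type*} [Field K] {q : K}

lemma even_tri (n : ℕ) : ∃ k, n * (n + 1) = k + k := Nat.even_mul_succ_self n

lemma hq_inv (hq0 : q ≠ 0) (hq : ∀ i : ℕ, 1 ≤ i → (1 : K) - q ^ i ≠ 0) :
    ∀ i : ℕ, 1 ≤ i → (1 : K) - q⁻¹ ^ i ≠ 0 := by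
  intro i hi
  have hqi : q ^ i ≠ 0 := pow_ne_zero _ hq0
  have : (1 : K) - q⁻¹ ^ i = -(q ^ i)⁻¹ * (1 - q ^ i) := by
    field_simp
    rw [div_pow, one_pow, sub_mul, one_div_mul_cancel hqi]; ring
  rw [this]
  exact mul_ne_zero (neg_ne_zero.mpr (inv_ne_zero hqi)) (hq i hi)

lemma qfact_inv (hq0 : q ≠ 0) (n : ℕ) :
    qfact q⁻¹ n * q ^ (n * (n + 1) / 2) = (-1 : K) ^ n * qfact q n := by
  induction n with
  | zero => simp [qfact]
  | succ n ih =>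
      have hpow : q ^ ((n + 1) * (n + 1 + 1) / 2) = q ^ (n * (n + 1) / 2) * q ^ (n + 1) := by
        rw [← pow_add]
        congr 1
        obtain ⟨k, hk⟩ := even_tri n
        have hr : (n + 1) * (n + 1 + 1) = n * (n + 1) + 2 * (n + 1) := by ring
        omega
      rw [qfact_succ, qfact_succ, hpow]
      have key : (1 - q⁻¹ ^ (n + 1)) * q ^ (n + 1) = -(1 - q ^ (n + 1)) := by
        field_simp
        rw [div_pow, one_pow, sub_mul, one_div_mul_cancel (pow_ne_zero _ hq0)]; ring
      calc qfact q⁻¹ n * (1 - q⁻¹ ^ (n + 1)) * (q ^ (n * (n + 1) / 2) * q ^ (n + 1))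
          = (qfact q⁻¹ n * q ^ (n * (n + 1) / 2)) * ((1 - q⁻¹ ^ (n + 1)) * q ^ (n + 1)) := by ring
        _ = ((-1 : K) ^ n * qfact q n) * (-(1 - q ^ (n + 1))) := by rw [ih, key]
        _ = (-1 : K) ^ (n + 1) * (qfact q n * (1 - q ^ (n + 1))) := by ring

lemma qfact_inv' (hq0 : q ≠ 0) (n : ℕ) :
    qfact q⁻¹ n = (-1 : K) ^ n * qfact q n / q ^ (n * (n + 1) / 2) := by
  rw [eq_div_iff (pow_ne_zero _ hq0), qfact_inv hq0]

lemma gaussBinom_inv (hq0 : q ≠ 0) (hq : ∀ i : ℕ, 1 ≤ i → (1 : K) - q ^ i ≠ 0)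
    {a b : ℕ} (h : b ≤ a) :
    gaussBinom q⁻¹ a b * q ^ (b * (a - b)) = gaussBinom q a b := by
  obtain ⟨c, rfl⟩ := Nat.exists_eq_add_of_le h
  have hpow : q ^ ((b + c) * (b + c + 1) / 2)
      = q ^ (b * (b + 1) / 2) * q ^ (c * (c + 1) / 2) * q ^ (b * c) := by
    rw [← pow_add, ← pow_add]
    congr 1
    obtain ⟨k1, hk1⟩ := even_tri b
    obtain ⟨k2, hk2⟩ := even_tri c
    have hr : (b + c) * (b + c + 1) = b * (b + 1) + c * (c + 1) + 2 * (b * c) := by ring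
    omega
  rw [show b + c - b = c from by omega]
  rw [gaussBinom_eq (hq_inv hq0 hq) (by omega), gaussBinom_eq hq (by omega),
    show b + c - b = c from by omega,
    qfact_inv' hq0, qfact_inv' hq0, qfact_inv' hq0, hpow]
  have h1 := qfact_ne_zero hq b
  have h2 := qfact_ne_zero hq c
  have h3 := qfact_ne_zero hq (b + c)
  have h4 : q ^ (b * (b + 1) / 2) ≠ 0 := pow_ne_zero _ hq0
  have h5 : q ^ (c * (c + 1) / 2) ≠ 0 := pow_ne_zero _ hq0
  have h6 : q ^ (b * c) ≠ 0 := pow_ne_zero _ hq0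
  field_simp
  ring

def cexp : ℕ → List ℕ → ℕ
  | _, [] => 0
  | n, i :: is => i * (n - i) + cexp i is

lemma gaussMultinomAux_inv (hq0 : q ≠ 0) (hq : ∀ i : ℕ, 1 ≤ i → (1 : K) - q ^ i ≠ 0) :
    ∀ (l : List ℕ) (n : ℕ), (n :: l).Pairwise (fun a b => b ≤ a) →
      gaussMultinomAux q⁻¹ n l * q ^ (cexp n l) = gaussMultinomAux q n l := by
  intro l
  induction l with
  | nil => intro n _; simp [gaussMultinomAux, cexp]
  | cons i is ih =>
      intro n hp
      rw [List.pairwise_cons] at hp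
      obtain ⟨hn, hp⟩ := hp
      have hin : i ≤ n := hn i (by simp)
      have h1 := gaussBinom_inv hq0 hq hin
      have h2 := ih i hp
      simp only [gaussMultinomAux, cexp, pow_add]
      rw [← h1, ← h2]
      ring

lemma gaussMultinom_inv (hq0 : q ≠ 0) (hq : ∀ i : ℕ, 1 ≤ i → (1 : K) - q ^ i ≠ 0)
    {n : ℕ} {J : Finset ℕ} (hJ : ∀ x ∈ J, x ≤ n) :
    gaussMultinom q⁻¹ n J * q ^ (cexp n ((J.sort (· ≤ ·)).reverse)) = gaussMultinom q n J := by
  apply gaussMultinomAux_inv hq0 hq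
  rw [List.pairwise_cons]
  constructor
  · intro a ha
    rw [List.mem_reverse, Finset.mem_sort] at ha
    exact hJ a ha
  · rw [List.pairwise_reverse]
    exact Finset.pairwise_sort _ _

end IgusaFE
end AuxFE2
noncomputable section AuxFE3
namespace IgusaFE

variable {K : Type*} [Field K] {q : K}

lemma sort_eq_of_sorted {s : Finset ℕ} {l : List ℕ} (hs : l.Pairwise (· ≤ ·)) (hn : l.Nodup)
    (hm : ∀ x, x ∈ l ↔ x ∈ s) : s.sort (· ≤ ·) = l := by
  apply List.Perm.eq_of_pairwise' (Finset.pairwise_sort _ _) hs ?_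
  apply List.perm_of_nodup_nodup_toFinset_eq (Finset.sort_nodup _ _) hn
  rw [Finset.sort_toFinset]
  ext x
  rw [List.mem_toFinset, hm]

lemma sort_insert_top {s : Finset ℕ} {a : ℕ} (h : ∀ x ∈ s, x < a) :
    (insert a s).sort (· ≤ ·) = s.sort (· ≤ ·) ++ [a] := by
  apply sort_eq_of_sorted
  · rw [List.pairwise_append]
    refine ⟨Finset.pairwise_sort _ _, List.pairwise_singleton _ _, ?_⟩
    intro x hx y hy
    rw [List.mem_singleton] at hy
    have := h x ((Finset.mem_sort _).mp hx)
    omega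
  · rw [List.nodup_append]
    refine ⟨Finset.sort_nodup _ _, List.nodup_singleton _, ?_⟩
    intro x hx y hy
    rw [List.mem_singleton] at hy
    have := h x ((Finset.mem_sort _).mp hx)
    omega
  · intro x
    simp only [List.mem_append, List.mem_singleton, Finset.mem_sort, Finset.mem_insert]
    tauto

lemma sort_insert_bot {s : Finset ℕ} {a : ℕ} (h : ∀ x ∈ s, a < x) :
    (insert a s).sort (· ≤ ·) = a :: s.sort (· ≤ ·) := by
  apply sort_eq_of_sorted
  · rw [List.pairwise_cons]
    exact ⟨fun b hb => le_of_lt (h b ((Finset.mem_sort _).mp hb)), Finset.pairwise_sort _ _⟩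
  · rw [List.nodup_cons]
    refine ⟨fun hh => ?_, Finset.sort_nodup _ _⟩
    have := h a ((Finset.mem_sort _).mp hh)
    omega
  · intro x
    simp only [List.mem_cons, Finset.mem_sort, Finset.mem_insert]

lemma sort_split {A B : Finset ℕ} {t : ℕ} (hA : ∀ x ∈ A, t < x) (hB : ∀ x ∈ B, x < t) :
    (insert t (A ∪ B)).sort (· ≤ ·) = B.sort (· ≤ ·) ++ t :: A.sort (· ≤ ·) := by
  apply sort_eq_of_sorted
  · rw [List.pairwise_append]
    refine ⟨Finset.pairwise_sort _ _, ?_, ?_⟩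
    · rw [List.pairwise_cons]
      exact ⟨fun b hb => le_of_lt (hA b ((Finset.mem_sort _).mp hb)), Finset.pairwise_sort _ _⟩
    · intro x hx y hy
      have hxB : x < t := hB x ((Finset.mem_sort _).mp hx)
      rcases List.mem_cons.mp hy with rfl | hy
      · exact le_of_lt hxB
      · exact le_of_lt (hxB.trans (hA y ((Finset.mem_sort _).mp hy)))
  · rw [List.nodup_append]
    refine ⟨Finset.sort_nodup _ _, ?_, ?_⟩
    · rw [List.nodup_cons]
      refine ⟨fun hh => ?_, Finset.sort_nodup _ _⟩
      have := hA t ((Finset.mem_sort _).mp hh)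
      omega
    · intro x hx y hy
      have hxB : x < t := hB x ((Finset.mem_sort _).mp hx)
      rcases List.mem_cons.mp hy with rfl | hy
      · omega
      · have := hA y ((Finset.mem_sort _).mp hy)
        omega
  · intro x
    simp only [List.mem_append, List.mem_cons, Finset.mem_sort, Finset.mem_insert,
      Finset.mem_union]
    tauto

lemma gaussMultinom_empty (q : K) (n : ℕ) : gaussMultinom q n ∅ = 1 := by
  rw [gaussMultinom, Finset.sort_empty]
  rfl

lemma gaussMultinom_insert_top {A : Finset ℕ} {k : ℕ} (hA : ∀ x ∈ A, x < k) (n : ℕ) :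
    gaussMultinom q n (insert k A) = gaussBinom q n k * gaussMultinom q k A := by
  rw [gaussMultinom, sort_insert_top hA, List.reverse_append]
  simp only [List.reverse_cons, List.reverse_nil, List.nil_append, List.singleton_append]
  rw [gaussMultinom]
  rfl

lemma gaussMultinomAux_append (q : K) (t : ℕ) (l2 : List ℕ) :
    ∀ (l1 : List ℕ) (n : ℕ), gaussMultinomAux q n (l1 ++ t :: l2)
      = gaussMultinomAux q n (l1 ++ [t]) * gaussMultinomAux q t l2 := by
  intro l1
  induction l1 with
  | nil =>
      intro n
      simp only [List.nil_append, gaussMultinomAux]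
      ring
  | cons i is ih =>
      intro n
      simp only [List.cons_append, List.append_eq, gaussMultinomAux]
      rw [ih i]
      ring

lemma gaussMultinom_split {A B : Finset ℕ} {t : ℕ} (hA : ∀ x ∈ A, t < x) (hB : ∀ x ∈ B, x < t)
    (n : ℕ) :
    gaussMultinom q n (insert t (A ∪ B))
      = gaussMultinom q n (insert t A) * gaussMultinom q t B := by
  rw [gaussMultinom, sort_split hA hB, List.reverse_append, List.reverse_cons,
    List.append_assoc, List.singleton_append, gaussMultinomAux_append]
  congr 1
  rw [gaussMultinom, sort_insert_bot hA, List.reverse_cons]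

end IgusaFE
end AuxFE3
noncomputable section AuxFE4
namespace IgusaFE

variable {K : Type*} [Field K] {q : K}

lemma gaussMultinom_singleton (q : K) (n t : ℕ) : gaussMultinom q n {t} = gaussBinom q n t := by
  rw [gaussMultinom, Finset.sort_singleton]
  simp [gaussMultinomAux]

def SU (q : K) (h k : ℕ) : K :=
  ∑ S ∈ (Finset.Icc 1 k).powerset, (-1 : K) ^ S.card * gaussMultinom q h S

def SD (q : K) (t h k : ℕ) : K :=
  ∑ S ∈ (Finset.Icc (t + 1) k).powerset, (-1 : K) ^ S.card * gaussMultinom q h (insert t S)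

lemma SU_rec (q : K) (h k : ℕ) :
    SU q h (k + 1) = SU q h k - gaussBinom q h (k + 1) * SU q (k + 1) k := by
  have hIcc : Finset.Icc 1 (k + 1) = insert (k + 1) (Finset.Icc 1 k) := by
    ext x; simp only [Finset.mem_Icc, Finset.mem_insert]; omega
  have hnot : k + 1 ∉ Finset.Icc 1 k := by simp
  rw [SU, hIcc, Finset.sum_powerset_insert hnot]
  have h2 : ∀ S ∈ (Finset.Icc 1 k).powerset,
      (-1 : K) ^ (insert (k + 1) S).card * gaussMultinom q h (insert (k + 1) S)
        = (-(gaussBinom q h (k + 1))) * ((-1 : K) ^ S.card * gaussMultinom q (k + 1) S) := by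
    intro S hS
    rw [Finset.mem_powerset] at hS
    have hSk : ∀ x ∈ S, x ≤ k := fun x hx => (Finset.mem_Icc.mp (hS hx)).2
    have hnotS : k + 1 ∉ S := fun hh => by have := hSk _ hh; omega
    rw [Finset.card_insert_of_notMem hnotS,
      gaussMultinom_insert_top (fun x hx => by have := hSk x hx; omega)]
    ring
  rw [Finset.sum_congr rfl h2, ← Finset.mul_sum]
  show SU q h k + -gaussBinom q h (k + 1) * SU q (k + 1) k = _
  ring

lemma SD_rec (q : K) (t h k : ℕ) (ht : t ≤ k) :
    SD q t h (k + 1) = SD q t h k - gaussBinom q h (k + 1) * SD q t (k + 1) k := by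
  have hIcc : Finset.Icc (t + 1) (k + 1) = insert (k + 1) (Finset.Icc (t + 1) k) := by
    ext x; simp only [Finset.mem_Icc, Finset.mem_insert]; omega
  have hnot : k + 1 ∉ Finset.Icc (t + 1) k := by simp
  rw [SD, hIcc, Finset.sum_powerset_insert hnot]
  have h2 : ∀ S ∈ (Finset.Icc (t + 1) k).powerset,
      (-1 : K) ^ (insert (k + 1) S).card * gaussMultinom q h (insert t (insert (k + 1) S))
        = (-(gaussBinom q h (k + 1)))
            * ((-1 : K) ^ S.card * gaussMultinom q (k + 1) (insert t S)) := by
    intro S hS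
    rw [Finset.mem_powerset] at hS
    have hSk : ∀ x ∈ S, t + 1 ≤ x ∧ x ≤ k := fun x hx => Finset.mem_Icc.mp (hS hx)
    have hnotS : k + 1 ∉ S := fun hh => by have := hSk _ hh; omega
    rw [Finset.card_insert_of_notMem hnotS, Finset.insert_comm,
      gaussMultinom_insert_top (A := insert t S)
        (fun x hx => by rcases Finset.mem_insert.mp hx with rfl | hx
                        · omega
                        · have := hSk x hx; omega)]
    ring
  rw [Finset.sum_congr rfl h2, ← Finset.mul_sum]
  show SD q t h k + -gaussBinom q h (k + 1) * SD q t (k + 1) k = _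
  ring

lemma SU_eq (hq : ∀ i : ℕ, 1 ≤ i → (1 : K) - q ^ i ≠ 0) :
    ∀ k v : ℕ, SU q (k + v + 1) k
      = (-1 : K) ^ k * q ^ (k * (k + 1) / 2) * gaussBinom q (k + v) k := by
  intro k
  induction k with
  | zero =>
      intro v
      rw [SU, show Finset.Icc 1 0 = (∅ : Finset ℕ) from by simp,
        Finset.powerset_empty, Finset.sum_singleton, gaussMultinom_empty, gaussBinom_zero]
      simp
  | succ k ih =>
      intro v
      have i0 := ih 0
      rw [show k + 0 + 1 = k + 1 from by omega, show k + 0 = k from by omega,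
        gaussBinom_self hq, mul_one] at i0
      have i1 := ih (v + 1)
      rw [show k + (v + 1) + 1 = k + v + 2 from by omega,
        show k + (v + 1) = k + v + 1 from by omega] at i1
      rw [show k + 1 + v + 1 = k + v + 2 from by omega,
        show k + 1 + v = k + v + 1 from by omega]
      rw [SU_rec q (k + v + 2) k, i1, i0]
      have hp := gaussBinom_pascal hq (u := k) (v := v)
      have hpow : q ^ ((k + 1) * (k + 1 + 1) / 2) = q ^ (k * (k + 1) / 2) * q ^ (k + 1) := by
        rw [← pow_add]
        congr 1
        obtain ⟨w, hw⟩ := even_tri k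
        have hr : (k + 1) * (k + 1 + 1) = k * (k + 1) + 2 * (k + 1) := by ring
        omega
      rw [hpow]
      linear_combination (-((-1 : K) ^ k * q ^ (k * (k + 1) / 2))) * hp

lemma SD_eq (hq : ∀ i : ℕ, 1 ≤ i → (1 : K) - q ^ i ≠ 0) :
    ∀ m v t : ℕ, 1 ≤ t → SD q t (t + m + v + 1) (t + m)
      = (-1 : K) ^ m * q ^ (m * (m + 1) / 2) * gaussBinom q (t + m + v + 1) t
          * gaussBinom q (m + v) m := by
  intro m
  induction m with
  | zero =>
      intro v t ht
      rw [SD, show Finset.Icc (t + 1) (t + 0) = (∅ : Finset ℕ) from by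
            apply Finset.Icc_eq_empty; omega,
        Finset.powerset_empty, Finset.sum_singleton,
        show insert t (∅ : Finset ℕ) = {t} from by simp,
        gaussMultinom_singleton, gaussBinom_zero]
      simp
  | succ m ih =>
      intro v t ht
      rw [show t + (m + 1) + v + 1 = t + m + 1 + v + 1 from by omega,
        show t + (m + 1) = t + m + 1 from by omega,
        show m + 1 + v = m + v + 1 from by omega]
      have i1 := ih (v + 1) t ht
      rw [show t + m + (v + 1) + 1 = t + m + 1 + v + 1 from by omega,
        show m + (v + 1) = m + v + 1 from by omega] at i1
      have i0 := ih 0 t ht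
      rw [show t + m + 0 + 1 = t + m + 1 from by omega,
        show m + 0 = m from by omega, gaussBinom_self hq, mul_one] at i0
      rw [SD_rec q t (t + m + 1 + v + 1) (t + m) (by omega), i1, i0]
      have e2 := gaussBinom_mul_gaussBinom hq (t := t) (x := m + 1) (y := v + 1)
      rw [show t + (m + 1) = t + m + 1 from by omega,
        show t + m + 1 + (v + 1) = t + m + 1 + v + 1 from by omega,
        show m + 1 + (v + 1) = m + v + 2 from by omega] at e2
      have hp := gaussBinom_pascal hq (u := m) (v := v)
      have hpow : q ^ ((m + 1) * (m + 1 + 1) / 2) = q ^ (m * (m + 1) / 2) * q ^ (m + 1) := by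
        rw [← pow_add]
        congr 1
        obtain ⟨w, hw⟩ := even_tri m
        have hr : (m + 1) * (m + 1 + 1) = m * (m + 1) + 2 * (m + 1) := by ring
        omega
      rw [hpow]
      linear_combination (-((-1 : K) ^ m * q ^ (m * (m + 1) / 2))) * e2
        + (-((-1 : K) ^ m * q ^ (m * (m + 1) / 2)
            * gaussBinom q (t + m + 1 + v + 1) t)) * hp

end IgusaFE
end AuxFE4
noncomputable section AuxFE5
namespace IgusaFE

variable {K : Type*} [Field K] {q : K}

lemma exp_arith {t h : ℕ} (h1 : 1 ≤ t) (h2 : t ≤ h - 1) (h3 : 1 ≤ h) :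
    t * (h - t) + (h - 1 - t) * (h - 1 - t + 1) / 2 + t * (t - 1) / 2 = h * (h - 1) / 2 := by
  obtain ⟨a, rfl⟩ : ∃ a, t = a + 1 := ⟨t - 1, by omega⟩
  obtain ⟨b, rfl⟩ : ∃ b, h = a + b + 2 := ⟨h - a - 2, by omega⟩
  rw [show a + b + 2 - (a + 1) = b + 1 from by omega,
    show a + b + 2 - 1 - (a + 1) = b from by omega,
    show a + 1 - 1 = a from by omega,
    show a + b + 2 - 1 = a + b + 1 from by omega]
  obtain ⟨k1, hk1⟩ := even_tri b
  obtain ⟨k2, hk2⟩ := even_tri a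
  have e1 : (a + 1) * a = a * (a + 1) := by ring
  have e3 : (a + b + 2) * (a + b + 1) = a * (a + 1) + b * (b + 1) + 2 * ((a + 1) * (b + 1)) := by
    ring
  omega

def SG (q : K) (h : ℕ) (J : Finset ℕ) : K :=
  ∑ I ∈ (Finset.Icc 1 (h - 1)).powerset.filter (fun I => J ⊆ I),
    (-1 : K) ^ I.card * gaussMultinom q h I

lemma SG_eq (hq : ∀ i : ℕ, 1 ≤ i → (1 : K) - q ^ i ≠ 0) :
    ∀ h : ℕ, 1 ≤ h → ∀ J : Finset ℕ, J ⊆ Finset.Icc 1 (h - 1) →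
      q ^ (cexp h ((J.sort (· ≤ ·)).reverse)) * SG q h J
        = (-1 : K) ^ (h - 1) * q ^ (h * (h - 1) / 2) * gaussMultinom q h J := by
  intro h
  induction h using Nat.strong_induction_on with
  | _ h IH =>
    intro hh J hJ
    rcases J.eq_empty_or_nonempty with rfl | hne
    · -- empty case
      rw [Finset.sort_empty]
      have hSG : SG q h ∅ = SU q h (h - 1) := by
        rw [SG, Finset.filter_true_of_mem (fun I _ => Finset.empty_subset I), SU]
      obtain ⟨k, rfl⟩ : ∃ k, h = k + 1 := ⟨h - 1, by omega⟩
      rw [show k + 1 - 1 = k from by omega] at hSG ⊢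
      have hsu := SU_eq hq k 0
      rw [show k + 0 + 1 = k + 1 from by omega, show k + 0 = k from by omega,
        gaussBinom_self hq, mul_one] at hsu
      rw [hSG, hsu, gaussMultinom_empty, List.reverse_nil,
        show cexp (k + 1) [] = 0 from rfl,
        show (k + 1) * k = k * (k + 1) from Nat.mul_comm _ _]
      ring
    · -- nonempty case
      obtain ⟨t, ht1, ht2, J', hJ'lt, rfl⟩ :
          ∃ t, 1 ≤ t ∧ t ≤ h - 1 ∧ ∃ J'', (∀ x ∈ J'', x < t) ∧ insert t J'' = J := by
        refine ⟨J.max' hne, ?_, ?_, J.erase (J.max' hne), ?_, Finset.insert_erase (J.max'_mem hne)⟩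
        · exact (Finset.mem_Icc.mp (hJ (J.max'_mem hne))).1
        · exact (Finset.mem_Icc.mp (hJ (J.max'_mem hne))).2
        · intro x hx
          rw [Finset.mem_erase] at hx
          exact lt_of_le_of_ne (Finset.le_max' J x hx.2) hx.1
      have htJ' : t ∉ J' := fun hh' => lt_irrefl t (hJ'lt t hh')
      have hJ'sub : J' ⊆ Finset.Icc 1 (t - 1) := by
        intro x hx
        have hx1 := hJ (Finset.mem_insert_of_mem hx)
        rw [Finset.mem_Icc] at hx1 ⊢
        have := hJ'lt x hx
        omega
      -- the splitting of the sum
      have hsplit : SG q h (insert t J') = -(SD q t h (h - 1) * SG q t J') := by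
        calc SG q h (insert t J')
            = ∑ p ∈ (Finset.Icc (t + 1) (h - 1)).powerset
                ×ˢ ((Finset.Icc 1 (t - 1)).powerset.filter (fun I' => J' ⊆ I')),
              -(((-1 : K) ^ p.1.card * gaussMultinom q h (insert t p.1))
                * ((-1 : K) ^ p.2.card * gaussMultinom q t p.2)) := by
              rw [SG]
              refine Finset.sum_nbij'
                (fun I => (I.filter (fun x => t < x), I.filter (fun x => x < t)))
                (fun p => insert t (p.1 ∪ p.2)) ?_ ?_ ?_ ?_ ?_
              · -- i maps into product
                intro I hI
                rw [Finset.mem_filter, Finset.mem_powerset] at hI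
                obtain ⟨hIsub, hJI⟩ := hI
                rw [Finset.mem_product]
                constructor
                · rw [Finset.mem_powerset]
                  intro x hx
                  rw [Finset.mem_filter] at hx
                  have := Finset.mem_Icc.mp (hIsub hx.1)
                  rw [Finset.mem_Icc]
                  omega
                · rw [Finset.mem_filter, Finset.mem_powerset]
                  constructor
                  · intro x hx
                    rw [Finset.mem_filter] at hx
                    have := Finset.mem_Icc.mp (hIsub hx.1)
                    rw [Finset.mem_Icc]
                    omega
                  · intro x hx
                    rw [Finset.mem_filter]
                    exact ⟨hJI (Finset.mem_insert_of_mem hx), hJ'lt x hx⟩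
              · -- j maps back
                intro p hp
                rw [Finset.mem_product, Finset.mem_powerset, Finset.mem_filter,
                  Finset.mem_powerset] at hp
                obtain ⟨hp1, hp2, hp3⟩ := hp
                rw [Finset.mem_filter, Finset.mem_powerset]
                constructor
                · intro x hx
                  rcases Finset.mem_insert.mp hx with rfl | hx
                  · rw [Finset.mem_Icc]; omega
                  · rcases Finset.mem_union.mp hx with hx | hx
                    · have := Finset.mem_Icc.mp (hp1 hx)
                      rw [Finset.mem_Icc]; omega
                    · have := Finset.mem_Icc.mp (hp2 hx)
                      rw [Finset.mem_Icc]; omega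
                · intro x hx
                  rcases Finset.mem_insert.mp hx with rfl | hx
                  · exact Finset.mem_insert_self _ _
                  · exact Finset.mem_insert_of_mem (Finset.mem_union_right _ (hp3 hx))
              · -- left inverse
                intro I hI
                rw [Finset.mem_filter, Finset.mem_powerset] at hI
                obtain ⟨hIsub, hJI⟩ := hI
                have htI : t ∈ I := hJI (Finset.mem_insert_self t J')
                ext x
                simp only [Finset.mem_insert, Finset.mem_union, Finset.mem_filter]
                constructor
                · rintro (rfl | ⟨hx, _⟩ | ⟨hx, _⟩)
                  · exact htI
                  · exact hx
                  · exact hx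
                · intro hx
                  rcases Nat.lt_trichotomy x t with hlt | rfl | hgt
                  · exact Or.inr (Or.inr ⟨hx, hlt⟩)
                  · exact Or.inl rfl
                  · exact Or.inr (Or.inl ⟨hx, hgt⟩)
              · -- right inverse
                intro p hp
                rw [Finset.mem_product, Finset.mem_powerset, Finset.mem_filter,
                  Finset.mem_powerset] at hp
                obtain ⟨hp1, hp2, _⟩ := hp
                have hb1 : ∀ x ∈ p.1, t < x := fun x hx => by
                  have := Finset.mem_Icc.mp (hp1 hx); omega
                have hb2 : ∀ x ∈ p.2, x < t := fun x hx => by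
                  have := Finset.mem_Icc.mp (hp2 hx); omega
                have e1 : (insert t (p.1 ∪ p.2)).filter (fun x => t < x) = p.1 := by
                  ext x
                  simp only [Finset.mem_filter, Finset.mem_insert, Finset.mem_union]
                  constructor
                  · rintro ⟨rfl | hx | hx, hlt⟩
                    · omega
                    · exact hx
                    · exact absurd hlt (by have := hb2 x hx; omega)
                  · intro hx
                    exact ⟨Or.inr (Or.inl hx), hb1 x hx⟩
                have e2 : (insert t (p.1 ∪ p.2)).filter (fun x => x < t) = p.2 := by
                  ext x
                  simp only [Finset.mem_filter, Finset.mem_insert, Finset.mem_union]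
                  constructor
                  · rintro ⟨rfl | hx | hx, hlt⟩
                    · omega
                    · exact absurd hlt (by have := hb1 x hx; omega)
                    · exact hx
                  · intro hx
                    exact ⟨Or.inr (Or.inr hx), hb2 x hx⟩
                exact Prod.ext e1 e2
              · -- summand equality
                intro I hI
                rw [Finset.mem_filter, Finset.mem_powerset] at hI
                obtain ⟨hIsub, hJI⟩ := hI
                have htI : t ∈ I := hJI (Finset.mem_insert_self t J')
                have hSgt : ∀ x ∈ I.filter (fun x => t < x), t < x :=
                  fun x hx => (Finset.mem_filter.mp hx).2
                have hBlt : ∀ x ∈ I.filter (fun x => x < t), x < t :=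
                  fun x hx => (Finset.mem_filter.mp hx).2
                have hIeq : insert t (I.filter (fun x => t < x) ∪ I.filter (fun x => x < t))
                    = I := by
                  ext x
                  simp only [Finset.mem_insert, Finset.mem_union, Finset.mem_filter]
                  constructor
                  · rintro (rfl | ⟨hx, _⟩ | ⟨hx, _⟩)
                    · exact htI
                    · exact hx
                    · exact hx
                  · intro hx
                    rcases Nat.lt_trichotomy x t with hlt | rfl | hgt
                    · exact Or.inr (Or.inr ⟨hx, hlt⟩)
                    · exact Or.inl rfl
                    · exact Or.inr (Or.inl ⟨hx, hgt⟩)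
                have htSB : t ∉ I.filter (fun x => t < x) ∪ I.filter (fun x => x < t) := by
                  rw [Finset.mem_union]
                  rintro (hh' | hh')
                  · exact absurd (Finset.mem_filter.mp hh').2 (lt_irrefl t)
                  · exact absurd (Finset.mem_filter.mp hh').2 (lt_irrefl t)
                have hdisj : Disjoint (I.filter (fun x => t < x)) (I.filter (fun x => x < t)) := by
                  rw [Finset.disjoint_left]
                  intro x hx1 hx2
                  have := (Finset.mem_filter.mp hx1).2
                  have := (Finset.mem_filter.mp hx2).2
                  omega
                conv_lhs => rw [← hIeq]
                rw [Finset.card_insert_of_notMem htSB, Finset.card_union_of_disjoint hdisj,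
                  gaussMultinom_split hSgt hBlt]
                ring
          _ = -(SD q t h (h - 1) * SG q t J') := by
              rw [SD, SG, Finset.sum_mul_sum, ← Finset.sum_product', ← Finset.sum_neg_distrib]
      -- now put everything together
      have iht := IH t (by omega) ht1 J' hJ'sub
      have hsd := SD_eq hq (h - 1 - t) 0 t ht1
      rw [show t + (h - 1 - t) + 0 + 1 = h from by omega,
        show t + (h - 1 - t) = h - 1 from by omega,
        show h - 1 - t + 0 = h - 1 - t from by omega,
        gaussBinom_self hq, mul_one] at hsd
      rw [sort_insert_top hJ'lt, List.reverse_append, List.reverse_singleton,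
        List.singleton_append,
        show cexp h (t :: (J'.sort (· ≤ ·)).reverse)
          = t * (h - t) + cexp t ((J'.sort (· ≤ ·)).reverse) from rfl,
        pow_add, hsplit, hsd,
        gaussMultinom_insert_top hJ'lt]
      have hsign : (-1 : K) ^ (h - 1) = (-1) ^ (h - 1 - t) * (-1) ^ (t - 1) * (-1) ^ 1 := by
        rw [← pow_add, ← pow_add]
        congr 1
        omega
      have hqpow : q ^ (h * (h - 1) / 2)
          = q ^ (t * (h - t)) * q ^ ((h - 1 - t) * (h - 1 - t + 1) / 2) * q ^ (t * (t - 1) / 2) := by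
        rw [← pow_add, ← pow_add]
        congr 1
        have := exp_arith ht1 ht2 hh
        omega
      rw [hsign, hqpow]
      linear_combination (-(q ^ (t * (h - t)) * (-1 : K) ^ (h - 1 - t)
        * q ^ ((h - 1 - t) * (h - 1 - t + 1) / 2) * gaussBinom q h t)) * iht

end IgusaFE
end AuxFE5
noncomputable section AuxFE6
namespace IgusaFE

variable {K : Type*} [Field K]

lemma inv_one_sub_inv {x : K} (hx : x ≠ 0) (hx1 : (1 : K) - x ≠ 0) :
    (1 - x⁻¹)⁻¹ = -(x * (1 - x)⁻¹) := by
  have hx1' : x - 1 ≠ 0 := fun hc => hx1 (by linear_combination -hc)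
  first
  | (field_simp; ring)
  | field_simp

lemma inv_div_one_sub_inv {x : K} (hx : x ≠ 0) (hx1 : (1 : K) - x ≠ 0) :
    x⁻¹ / (1 - x⁻¹) = -(1 + x / (1 - x)) := by
  have hx1' : x - 1 ≠ 0 := fun hc => hx1 (by linear_combination -hc)
  first
  | (field_simp; ring)
  | field_simp

lemma igusa_funEq_aux (q : K) (X : ℕ → K) (hq0 : q ≠ 0)
    (hq : ∀ i : ℕ, 1 ≤ i → (1 : K) - q ^ i ≠ 0) (hX0 : ∀ i, X i ≠ 0)
    (hX1 : ∀ i, (1 : K) - X i ≠ 0) (h : ℕ) (hh : 0 < h) :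
    igusa h q⁻¹ (fun i => (X i)⁻¹)
      = (-1) ^ h * X h * (q ^ (h * (h - 1) / 2))⁻¹ * igusa h q X := by
  have hh1 : 1 ≤ h := hh
  have hpw : ∀ I : Finset ℕ, I ∈ (Finset.Icc 1 (h - 1)).powerset →
      I.powerset = (Finset.Icc 1 (h - 1)).powerset.filter (fun J => J ⊆ I) := by
    intro I hI
    have hIsub := Finset.mem_powerset.mp hI
    ext J
    simp only [Finset.mem_powerset, Finset.mem_filter]
    exact ⟨fun hJ => ⟨hJ.trans hIsub, hJ⟩, fun hJ => hJ.2⟩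
  have key : ∀ I ∈ (Finset.Icc 1 (h - 1)).powerset,
      gaussMultinom q⁻¹ h I * ∏ i ∈ I, (X i)⁻¹ / (1 - (X i)⁻¹)
        = ∑ J ∈ (Finset.Icc 1 (h - 1)).powerset,
            if J ⊆ I then ((-1 : K) ^ I.card * gaussMultinom q⁻¹ h I)
              * ∏ j ∈ J, X j / (1 - X j) else 0 := by
    intro I hI
    have hprod : ∏ i ∈ I, (X i)⁻¹ / (1 - (X i)⁻¹)
        = (-1 : K) ^ I.card * ∑ J ∈ I.powerset, ∏ j ∈ J, X j / (1 - X j) := by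
      calc ∏ i ∈ I, (X i)⁻¹ / (1 - (X i)⁻¹)
          = ∏ i ∈ I, (-1 : K) * (X i / (1 - X i) + 1) := by
            refine Finset.prod_congr rfl fun i _ => ?_
            rw [inv_div_one_sub_inv (hX0 i) (hX1 i)]
            ring
        _ = (-1 : K) ^ I.card * ∏ i ∈ I, (X i / (1 - X i) + 1) := by
            rw [Finset.prod_mul_distrib, Finset.prod_const]
        _ = (-1 : K) ^ I.card * ∑ J ∈ I.powerset, ∏ j ∈ J, X j / (1 - X j) := by
            rw [Finset.prod_add]
            simp only [Finset.prod_const_one, mul_one]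
    rw [hprod, hpw I hI, Finset.sum_filter, Finset.mul_sum, Finset.mul_sum]
    exact Finset.sum_congr rfl fun J _ => by split_ifs <;> ring
  have step : ∀ J ∈ (Finset.Icc 1 (h - 1)).powerset,
      (∑ I ∈ (Finset.Icc 1 (h - 1)).powerset,
          if J ⊆ I then ((-1 : K) ^ I.card * gaussMultinom q⁻¹ h I)
            * ∏ j ∈ J, X j / (1 - X j) else 0)
        = ((-1 : K) ^ (h - 1) * (q ^ (h * (h - 1) / 2))⁻¹ * gaussMultinom q h J)
            * ∏ j ∈ J, X j / (1 - X j) := by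
    intro J hJp
    have hJsub := Finset.mem_powerset.mp hJp
    have hbound : ∀ x ∈ J, x ≤ h := fun x hx => by
      have := Finset.mem_Icc.mp (hJsub hx); omega
    have h1 := SG_eq (hq_inv hq0 hq) h hh1 J hJsub
    rw [inv_pow, inv_pow] at h1
    have h2 := gaussMultinom_inv hq0 hq (n := h) (J := J) hbound
    have hqc : (q ^ (cexp h ((J.sort (· ≤ ·)).reverse)) : K) ≠ 0 := pow_ne_zero _ hq0
    have hval : SG q⁻¹ h J
        = (-1 : K) ^ (h - 1) * (q ^ (h * (h - 1) / 2))⁻¹ * gaussMultinom q h J := by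
      calc SG q⁻¹ h J
          = q ^ (cexp h ((J.sort (· ≤ ·)).reverse))
              * ((q ^ (cexp h ((J.sort (· ≤ ·)).reverse)))⁻¹ * SG q⁻¹ h J) := by
            rw [← mul_assoc, mul_inv_cancel₀ hqc, one_mul]
        _ = q ^ (cexp h ((J.sort (· ≤ ·)).reverse))
              * ((-1 : K) ^ (h - 1) * (q ^ (h * (h - 1) / 2))⁻¹ * gaussMultinom q⁻¹ h J) := by
            rw [h1]
        _ = (-1 : K) ^ (h - 1) * (q ^ (h * (h - 1) / 2))⁻¹
              * (gaussMultinom q⁻¹ h J * q ^ (cexp h ((J.sort (· ≤ ·)).reverse))) := by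
            ring
        _ = (-1 : K) ^ (h - 1) * (q ^ (h * (h - 1) / 2))⁻¹ * gaussMultinom q h J := by
            rw [h2]
    rw [← Finset.sum_filter, ← Finset.sum_mul, ← SG, hval]
  have hsum : ∑ I ∈ (Finset.Icc 1 (h - 1)).powerset,
      gaussMultinom q⁻¹ h I * ∏ i ∈ I, (X i)⁻¹ / (1 - (X i)⁻¹)
        = (-1 : K) ^ (h - 1) * (q ^ (h * (h - 1) / 2))⁻¹
            * ∑ J ∈ (Finset.Icc 1 (h - 1)).powerset,
                gaussMultinom q h J * ∏ j ∈ J, X j / (1 - X j) := by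
    rw [Finset.sum_congr rfl key, Finset.sum_comm, Finset.sum_congr rfl step, Finset.mul_sum]
    exact Finset.sum_congr rfl fun J _ => by ring
  have hsign : (-1 : K) ^ h = -(-1 : K) ^ (h - 1) := by
    conv_lhs => rw [show h = h - 1 + 1 from by omega]
    rw [pow_succ]
    ring
  simp only [igusa]
  rw [hsum, inv_one_sub_inv (hX0 h) (hX1 h), hsign]
  ring

end IgusaFE
end AuxFE6

/-- Functional equation for the Igusa function `I_h`:
`I_h(Y⁻¹; X_1⁻¹,…,X_h⁻¹) = (-1)^h · X_h · Y^{-h(h-1)/2} · I_h(Y; X_1,…,X_h)`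
in the field of rational functions `ℚ(Y, X_1, …, X_h)` (here `Y` is the variable with
index `0` and `X_i` the variable with index `i`). -/
theorem igusa_funEq (h : ℕ) (hh : 0 < h) :
    igusa h
        (algebraMap (MvPolynomial ℕ ℚ) (FractionRing (MvPolynomial ℕ ℚ))
          (MvPolynomial.X 0))⁻¹
        (fun i => (algebraMap (MvPolynomial ℕ ℚ) (FractionRing (MvPolynomial ℕ ℚ))
          (MvPolynomial.X i))⁻¹) =
      (-1) ^ h *
        algebraMap (MvPolynomial ℕ ℚ) (FractionRing (MvPolynomial ℕ ℚ)) (MvPolynomial.X h) *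
        (algebraMap (MvPolynomial ℕ ℚ) (FractionRing (MvPolynomial ℕ ℚ))
            (MvPolynomial.X 0) ^ (h * (h - 1) / 2))⁻¹ *
        igusa h
          (algebraMap (MvPolynomial ℕ ℚ) (FractionRing (MvPolynomial ℕ ℚ))
            (MvPolynomial.X 0))
          (fun i => algebraMap (MvPolynomial ℕ ℚ) (FractionRing (MvPolynomial ℕ ℚ))
            (MvPolynomial.X i)) := by
  have hinj : Function.Injective
      (algebraMap (MvPolynomial ℕ ℚ) (FractionRing (MvPolynomial ℕ ℚ))) :=
    IsFractionRing.injective _ _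
  have hXne : ∀ i : ℕ,
      algebraMap (MvPolynomial ℕ ℚ) (FractionRing (MvPolynomial ℕ ℚ)) (MvPolynomial.X i)
        ≠ 0 := by
    intro i hc
    have h0 : (MvPolynomial.X i : MvPolynomial ℕ ℚ) = 0 := hinj (by rw [hc, map_zero])
    exact MvPolynomial.X_ne_zero _ h0
  have hX1 : ∀ i : ℕ, (1 : FractionRing (MvPolynomial ℕ ℚ))
      - algebraMap (MvPolynomial ℕ ℚ) (FractionRing (MvPolynomial ℕ ℚ)) (MvPolynomial.X i)
        ≠ 0 := by
    intro i hc
    have h1 : algebraMap (MvPolynomial ℕ ℚ) (FractionRing (MvPolynomial ℕ ℚ))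
        (MvPolynomial.X i)
        = algebraMap (MvPolynomial ℕ ℚ) (FractionRing (MvPolynomial ℕ ℚ)) 1 := by
      rw [map_one]
      linear_combination -hc
    have h3 := congrArg MvPolynomial.constantCoeff (hinj h1)
    rw [MvPolynomial.constantCoeff_X, map_one] at h3
    exact zero_ne_one h3
  have hq : ∀ i : ℕ, 1 ≤ i → (1 : FractionRing (MvPolynomial ℕ ℚ))
      - (algebraMap (MvPolynomial ℕ ℚ) (FractionRing (MvPolynomial ℕ ℚ))
          (MvPolynomial.X 0)) ^ i ≠ 0 := by
    intro i hi hc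
    have h1 : algebraMap (MvPolynomial ℕ ℚ) (FractionRing (MvPolynomial ℕ ℚ))
        (MvPolynomial.X 0 ^ i)
        = algebraMap (MvPolynomial ℕ ℚ) (FractionRing (MvPolynomial ℕ ℚ)) 1 := by
      rw [map_one, map_pow]
      linear_combination -hc
    have h3 := congrArg MvPolynomial.constantCoeff (hinj h1)
    rw [map_pow, MvPolynomial.constantCoeff_X, map_one,
      zero_pow (by omega : i ≠ 0)] at h3
    exact zero_ne_one h3
  exact IgusaFE.igusa_funEq_aux _ _ (hXne 0) hq hXne hX1 h hh
end

section
/- For every h ∈ ℕ, the Igusa function I_h^∘ satisfies the functional equation I_h^∘(Y^{−1}; X_1^{−1},…,X_h^{−1}) = (−1)^h · X_h^{−1} · Y^{−h(h−1)/2} · I_h^∘(Y; X_1,…,X_h) in the field of rational functions ℚ(Y,X_1,…,X_h). -/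
noncomputable section
-- ===================== auxiliary development ======================

lemma choose2_succ (m : ℕ) : (m + 1).choose 2 = m.choose 2 + m := by
  simpa [Nat.choose_one_right, Nat.add_comm] using Nat.choose_succ_succ m 1

lemma choose2_add (a b : ℕ) : (a + b).choose 2 = a.choose 2 + b.choose 2 + a * b := by
  induction b with
  | zero => simp
  | succ n ih =>
    rw [← Nat.add_assoc, choose2_succ, choose2_succ, ih]
    ring

lemma choose2_sub {k h : ℕ} (hk : k ≤ h) :
    h.choose 2 = k.choose 2 + (h - k).choose 2 + k * (h - k) := by
  have := choose2_add k (h - k)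
  rwa [Nat.add_sub_cancel' hk] at this

section Field
variable {K : Type*} [Field K] (Y : K)

/-- `P n = ∏_{i=1}^n (1 - Y^i)`. -/
def Pfun (n : ℕ) : K := ∏ i ∈ Finset.Icc 1 n, (1 - Y ^ i)

variable {Y}
variable (hY1 : ∀ i : ℕ, 1 ≤ i → (1 : K) - Y ^ i ≠ 0)

include hY1

lemma Pfun_ne_zero (n : ℕ) : Pfun Y n ≠ 0 := by
  refine Finset.prod_ne_zero_iff.2 fun i hi => hY1 i ?_
  exact (Finset.mem_Icc.1 hi).1

omit hY1

lemma Pfun_succ (n : ℕ) : Pfun Y (n + 1) = Pfun Y n * (1 - Y ^ (n + 1)) := by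
  rw [Pfun, Finset.prod_Icc_succ_top (Nat.le_add_left 1 n)]; rfl

lemma num_eq {a b : ℕ} (hb : b ≤ a) :
    (∏ i ∈ Finset.Icc (a - b + 1) a, (1 - Y ^ i)) * Pfun Y (a - b) = Pfun Y a := by
  have e1 : Finset.Icc (a - b + 1) a = Finset.Ioc (a - b) a := by
    ext x; simp only [Finset.mem_Icc, Finset.mem_Ioc]; omega
  have e2 : ∀ m : ℕ, Finset.Icc 1 m = Finset.Ioc 0 m := by
    intro m; ext x; simp only [Finset.mem_Icc, Finset.mem_Ioc]; omega
  rw [Pfun, Pfun, e1, e2, e2, mul_comm]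
  exact Finset.prod_Ioc_consecutive _ (Nat.zero_le _) (Nat.sub_le a b)

include hY1

lemma gaussBinom_eq_P {a b : ℕ} (hb : b ≤ a) :
    gaussBinom Y a b = Pfun Y a / (Pfun Y b * Pfun Y (a - b)) := by
  have hb0 := Pfun_ne_zero hY1 b
  have hab := Pfun_ne_zero hY1 (a - b)
  rw [gaussBinom, show (∏ i ∈ Finset.Icc 1 b, (1 - Y ^ i)) = Pfun Y b from rfl,
    ← num_eq (Y := Y) hb]
  field_simp

omit hY1 in
lemma gaussBinom_zero (a : ℕ) : gaussBinom Y a 0 = 1 := by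
  simp [gaussBinom]

omit hY1

lemma gaussBinom_self (a : ℕ) (hY1 : ∀ i : ℕ, 1 ≤ i → (1 : K) - Y ^ i ≠ 0) :
    gaussBinom Y a a = 1 := by
  rw [gaussBinom, Nat.sub_self]
  exact div_self (Pfun_ne_zero hY1 a)

include hY1

lemma gaussBinom_ne_zero {a b : ℕ} (hb : b ≤ a) : gaussBinom Y a b ≠ 0 := by
  rw [gaussBinom_eq_P hY1 hb]
  exact div_ne_zero (Pfun_ne_zero hY1 a)
    (mul_ne_zero (Pfun_ne_zero hY1 b) (Pfun_ne_zero hY1 (a - b)))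

/-- Pascal's rule for Gaussian binomials. -/
lemma gaussBinom_pascal {n j : ℕ} (h1 : 1 ≤ j) (h2 : j ≤ n) :
    gaussBinom Y (n + 1) j = gaussBinom Y n (j - 1) + Y ^ j * gaussBinom Y n j := by
  have e1 : n - (j - 1) = n - j + 1 := by omega
  rw [gaussBinom_eq_P hY1 (by omega), gaussBinom_eq_P hY1 (by omega),
    gaussBinom_eq_P hY1 h2, e1,
    show n + 1 - j = n - j + 1 by omega,
    Pfun_succ (Y := Y) n, Pfun_succ (Y := Y) (n - j),
    show Pfun Y j = Pfun Y (j - 1) * (1 - Y ^ j) from by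
      have hps := Pfun_succ (Y := Y) (j - 1)
      rwa [show j - 1 + 1 = j from by omega] at hps,
    show (1 : K) - Y ^ (n + 1) = 1 - Y ^ j * Y ^ (n - j + 1) from by
      rw [← pow_add]; congr 2; omega]
  have h3 := Pfun_ne_zero (Y := Y) hY1 (j - 1)
  have h4 := Pfun_ne_zero (Y := Y) hY1 (n - j)
  have h5 := hY1 j (by omega)
  have h6 := hY1 (n - j + 1) (by omega)
  field_simp
  ring

/-- `binom(h,k)·binom(k,m) = binom(h,m)·binom(h-m,k-m)`. -/
lemma gaussBinom_mul_gaussBinom {h k m : ℕ} (h1 : m ≤ k) (h2 : k ≤ h) :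
    gaussBinom Y h k * gaussBinom Y k m =
      gaussBinom Y h m * gaussBinom Y (h - m) (k - m) := by
  rw [gaussBinom_eq_P hY1 h2, gaussBinom_eq_P hY1 h1,
    gaussBinom_eq_P hY1 (le_trans h1 h2), gaussBinom_eq_P hY1 (by omega),
    show h - m - (k - m) = h - k from by omega]
  have q1 := Pfun_ne_zero (Y := Y) hY1 h
  have q2 := Pfun_ne_zero (Y := Y) hY1 k
  have q3 := Pfun_ne_zero (Y := Y) hY1 m
  have q4 := Pfun_ne_zero (Y := Y) hY1 (h - k)
  have q5 := Pfun_ne_zero (Y := Y) hY1 (k - m)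
  have q6 := Pfun_ne_zero (Y := Y) hY1 (h - m)
  field_simp

/-- Inversion of Gaussian binomials. -/
lemma gaussBinom_inv {a b : ℕ} (hb : b ≤ a) (hY : Y ≠ 0) :
    gaussBinom Y⁻¹ a b = (Y ^ (b * (a - b)))⁻¹ * gaussBinom Y a b := by
  have key : ∀ c d : ℕ, (∏ i ∈ Finset.Icc c d, (1 - Y⁻¹ ^ i)) =
      (-1) ^ (Finset.Icc c d).card * (Y ^ (∑ i ∈ Finset.Icc c d, i))⁻¹ *
        ∏ i ∈ Finset.Icc c d, (1 - Y ^ i) := by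
    intro c d
    rw [← Finset.prod_pow_eq_pow_sum, ← Finset.prod_inv_distrib,
      ← Finset.prod_const, ← Finset.prod_mul_distrib, ← Finset.prod_mul_distrib]
    refine Finset.prod_congr rfl fun i _ => ?_
    have hYi : Y ^ i ≠ 0 := pow_ne_zero _ hY
    field_simp
    rw [one_div, inv_pow, sub_mul, inv_mul_cancel₀ hYi]; ring
  have hcard1 : (Finset.Icc (a - b + 1) a).card = b := by
    rw [Nat.card_Icc]; omega
  have hcard2 : (Finset.Icc 1 b).card = b := by
    rw [Nat.card_Icc]; omega
  have hsum : (∑ i ∈ Finset.Icc (a - b + 1) a, i) =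
      (∑ i ∈ Finset.Icc 1 b, i) + b * (a - b) := by
    have : Finset.Icc (a - b + 1) a = (Finset.Icc 1 b).image (fun x => x + (a - b)) := by
      ext x
      simp only [Finset.mem_Icc, Finset.mem_image]
      constructor
      · intro hx; exact ⟨x - (a - b), by omega, by omega⟩
      · rintro ⟨y, hy, rfl⟩; omega
    rw [this, Finset.sum_image (by intro x _ y _ hxy; simp only at hxy; omega), Finset.sum_add_distrib,
      Finset.sum_const, hcard2, smul_eq_mul]
  have hYp : ∀ m : ℕ, (Y : K) ^ m ≠ 0 := fun m => pow_ne_zero _ hY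
  have hD : (∏ i ∈ Finset.Icc 1 b, (1 - Y ^ i)) ≠ 0 := Pfun_ne_zero hY1 b
  have hsgn : ((-1 : K)) ^ b ≠ 0 := pow_ne_zero _ (by norm_num)
  rw [gaussBinom, gaussBinom, key, key, hcard1, hcard2, hsum, pow_add]
  field_simp

/-- The alternating sum `A(n) = Σ_{j=0}^{n} (-1)^j Y^{C(n-j,2)} binom(n,j)_Y`. -/
def Asum (Y : K) (n : ℕ) : K :=
  ∑ j ∈ Finset.range (n + 1), (-1) ^ j * Y ^ ((n - j).choose 2) * gaussBinom Y n j

omit hY1 in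
lemma Asum_zero : Asum Y 0 = 1 := by
  simp [Asum, gaussBinom]

include hY1

lemma Asum_succ (n : ℕ) : Asum Y (n + 1) = (Y ^ n - 1) * Asum Y n := by
  set g : ℕ → K := fun j => (-1) ^ j * Y ^ ((n - j).choose 2) * gaussBinom Y n j with hg
  have hAn : Asum Y n = ∑ j ∈ Finset.range n, g j + g n := Finset.sum_range_succ g n
  have hAn' : Asum Y n = ∑ j ∈ Finset.range n, g (j + 1) + g 0 := Finset.sum_range_succ' g n
  have hgn : g n = (-1) ^ n := by
    simp [hg, gaussBinom_self n hY1]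
  have hg0 : g 0 = Y ^ (n.choose 2) := by
    simp [hg, gaussBinom_zero]
  have key : ∀ j ∈ Finset.range n,
      (-1 : K) ^ (j + 1) * Y ^ ((n + 1 - (j + 1)).choose 2) * gaussBinom Y (n + 1) (j + 1)
        = -g j + Y ^ n * g (j + 1) := by
    intro j hj
    have hj' : j < n := Finset.mem_range.1 hj
    have hp := gaussBinom_pascal hY1 (n := n) (j := j + 1) (by omega) (by omega)
    rw [show j + 1 - 1 = j from rfl] at hp
    rw [show n + 1 - (j + 1) = n - j from by omega, hp]
    have hc : (n - j).choose 2 = (n - (j + 1)).choose 2 + (n - (j + 1)) := by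
      have hcc := choose2_succ (n - (j + 1))
      rwa [show n - (j + 1) + 1 = n - j from by omega] at hcc
    rw [hg]
    simp only
    rw [hc, pow_add]
    have hpw : Y ^ (n - (j + 1)) * Y ^ (j + 1) = Y ^ n := by
      rw [← pow_add]; congr 1; omega
    linear_combination ((-1 : K) ^ (j + 1) * Y ^ ((n - (j + 1)).choose 2) *
      gaussBinom Y n (j + 1)) * hpw
  have expand : Asum Y (n + 1) =
      ∑ j ∈ Finset.range n, ((-1 : K) ^ (j + 1) * Y ^ ((n + 1 - (j + 1)).choose 2) *
          gaussBinom Y (n + 1) (j + 1)) +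
        (-1 : K) ^ 0 * Y ^ ((n + 1 - 0).choose 2) * gaussBinom Y (n + 1) 0 +
        (-1 : K) ^ (n + 1) * Y ^ ((n + 1 - (n + 1)).choose 2) * gaussBinom Y (n + 1) (n + 1) := by
    rw [Asum, Finset.sum_range_succ, Finset.sum_range_succ']
  rw [expand, Finset.sum_congr rfl key, gaussBinom_zero, gaussBinom_self _ hY1,
    Finset.sum_add_distrib, Finset.sum_neg_distrib, ← Finset.mul_sum]
  have e1 : ∑ j ∈ Finset.range n, g j = Asum Y n - (-1) ^ n := by
    rw [hAn, hgn]; ring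
  have e2 : ∑ j ∈ Finset.range n, g (j + 1) = Asum Y n - Y ^ (n.choose 2) := by
    rw [hAn', hg0]; ring
  rw [e1, e2]
  simp only [Nat.sub_zero, Nat.sub_self, show (0 : ℕ).choose 2 = 0 from rfl, pow_zero,
    mul_one, one_mul]
  rw [choose2_succ n, pow_add]
  ring

lemma Asum_eq_zero {n : ℕ} (hn : 1 ≤ n) : Asum Y n = 0 := by
  induction n with
  | zero => omega
  | succ m ih =>
    rw [Asum_succ hY1]
    rcases Nat.eq_zero_or_pos m with hm | hm
    · subst hm; simp
    · rw [ih hm, mul_zero]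

lemma Asum_partial {n : ℕ} (hn : 1 ≤ n) :
    ∑ j ∈ Finset.range n, (-1 : K) ^ j * Y ^ ((n - j).choose 2) * gaussBinom Y n j
      = (-1) ^ (n - 1) := by
  have h1 : Asum Y n = (∑ j ∈ Finset.range n,
      (-1 : K) ^ j * Y ^ ((n - j).choose 2) * gaussBinom Y n j) + (-1) ^ n := by
    rw [Asum, Finset.sum_range_succ, gaussBinom_self n hY1]
    simp
  rw [Asum_eq_zero hY1 hn] at h1
  have h2 : ((-1 : K)) ^ (n - 1) = -(-1 : K) ^ n := by
    rw [show n = (n - 1) + 1 from by omega, pow_succ]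
    simp
  rw [h2]
  linear_combination -h1
end Field

/-- Inversion exponent for the Gaussian multinomial. -/
def eAux : ℕ → List ℕ → ℕ
  | _, [] => 0
  | n, i :: is => i * (n - i) + eAux i is

/-- Complementary exponent: sum of `C(μ,2)` over the parts of the composition. -/
def cAux : ℕ → List ℕ → ℕ
  | n, [] => n.choose 2
  | n, i :: is => (n - i).choose 2 + cAux i is

def cSet (n : ℕ) (I : Finset ℕ) : ℕ := cAux n ((I.sort (· ≤ ·)).reverse)

/-- Validity of a descending chain below `n`. -/
def VChain (n : ℕ) (l : List ℕ) : Prop :=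
  l.Pairwise (· > ·) ∧ ∀ i ∈ l, 1 ≤ i ∧ i < n

lemma vchain_tail {n i : ℕ} {is : List ℕ} (h : VChain n (i :: is)) : VChain i is := by
  obtain ⟨hp, hm⟩ := h
  rw [List.pairwise_cons] at hp
  exact ⟨hp.2, fun j hj => ⟨(hm j (List.mem_cons_of_mem _ hj)).1, hp.1 j hj⟩⟩

lemma eAux_add_cAux {n : ℕ} {l : List ℕ} (h : VChain n l) :
    eAux n l + cAux n l = n.choose 2 := by
  induction l generalizing n with
  | nil => simp [eAux, cAux]
  | cons i is ih =>
    have hi : 1 ≤ i ∧ i < n := h.2 i List.mem_cons_self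
    have := ih (vchain_tail h)
    rw [eAux, cAux]
    have hsplit := choose2_sub (le_of_lt hi.2)
    omega

lemma sort_insert_top {I : Finset ℕ} {k : ℕ} (hk : ∀ x ∈ I, x < k) :
    (insert k I).sort (· ≤ ·) = I.sort (· ≤ ·) ++ [k] := by
  have hkI : k ∉ I := fun hmem => lt_irrefl k (hk k hmem)
  refine (fun p s₁ s₂ => List.Perm.eq_of_pairwise' (r := (· ≤ ·)) s₁ s₂ p) ?_ ?_ ?_
  · exact ((Finset.sort_perm_toList _ _).trans
      ((Finset.toList_insert hkI).trans
        ((List.Perm.cons k (Finset.sort_perm_toList _ _).symm).trans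
          (List.perm_append_singleton _ _).symm)))
  · exact Finset.pairwise_sort _ _
  · rw [List.pairwise_append]
    refine ⟨Finset.pairwise_sort _ _, List.pairwise_singleton _ _, ?_⟩
    intro a ha b hb
    rw [List.mem_singleton] at hb
    subst hb
    exact le_of_lt (hk a (Finset.mem_sort (α := ℕ) (· ≤ ·) |>.1 ha))

lemma sortRev_insert_top {I : Finset ℕ} {k : ℕ} (hk : ∀ x ∈ I, x < k) :
    ((insert k I).sort (· ≤ ·)).reverse = k :: (I.sort (· ≤ ·)).reverse := by
  rw [sort_insert_top hk, List.reverse_append]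
  rfl

lemma vchain_of_subset {n : ℕ} {I : Finset ℕ} (hI : ∀ x ∈ I, 1 ≤ x ∧ x < n) :
    VChain n ((I.sort (· ≤ ·)).reverse) := by
  constructor
  · rw [List.pairwise_reverse]
    exact List.sortedLT_iff_pairwise.1 (Finset.sortedLT_sort I)
  · intro i hi
    rw [List.mem_reverse, Finset.mem_sort] at hi
    exact hI i hi

section SplitMax
variable {M : Type*} [AddCommMonoid M]

lemma sum_split_max (n : ℕ) (J : Finset ℕ) (F : Finset ℕ → M) :
    ∑ I ∈ (Finset.Icc 1 n).powerset.filter (fun I => J ⊆ I), F I =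
      (if J = ∅ then F ∅ else 0) +
        ∑ k ∈ Finset.Icc 1 n, ∑ I ∈ (Finset.Icc 1 (k - 1)).powerset.filter
          (fun I => J ⊆ insert k I), F (insert k I) := by
  classical
  set A := (Finset.Icc 1 n).powerset.filter (fun I => J ⊆ I) with hA
  rw [← Finset.sum_filter_add_sum_filter_not A (fun I => I = ∅) F]
  congr 1
  · by_cases hJ : J = ∅
    · subst hJ
      rw [if_pos rfl]
      have : A.filter (fun I => I = ∅) = {∅} := by
        ext I
        simp only [hA, Finset.mem_filter, Finset.mem_powerset, Finset.mem_singleton]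
        constructor
        · rintro ⟨_, h⟩; exact h
        · rintro rfl; simp
      rw [this, Finset.sum_singleton]
    · rw [if_neg hJ]
      have : A.filter (fun I => I = ∅) = ∅ := by
        ext I
        simp only [hA, Finset.mem_filter, Finset.mem_powerset, Finset.notMem_empty,
          iff_false, not_and, and_imp]
        rintro _ hJI rfl
        exact hJ (Finset.subset_empty.1 hJI)
      rw [this, Finset.sum_empty]
  · rw [← Finset.sum_sigma ((Finset.Icc 1 n)) (fun k => (Finset.Icc 1 (k - 1)).powerset.filter
          (fun I => J ⊆ insert k I)) (fun x => F (insert x.1 x.2))]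
    refine Finset.sum_nbij' (i := fun I => (⟨I.sup id, I.erase (I.sup id)⟩ : (_ : ℕ) × Finset ℕ))
      (j := fun x => insert x.1 x.2) ?_ ?_ ?_ ?_ ?_
    · -- i maps into sigma
      intro I hI
      simp only [hA, Finset.mem_filter, Finset.mem_powerset] at hI
      obtain ⟨⟨hIsub, hJI⟩, hne'⟩ := hI
      have hne : I.Nonempty := Finset.nonempty_iff_ne_empty.2 hne'
      have hmem : I.sup id ∈ I := by
        have := Finset.max'_mem I hne
        rwa [Finset.max'_eq_sup', Finset.sup'_eq_sup] at this
      simp only [Finset.mem_sigma, Finset.mem_filter, Finset.mem_powerset]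
      refine ⟨hIsub hmem, ?_, ?_⟩
      · intro x hx
        have hxI := Finset.mem_of_mem_erase hx
        have hxne := Finset.ne_of_mem_erase hx
        have hxle : x ≤ I.sup id := Finset.le_sup (f := id) hxI
        have := Finset.mem_Icc.1 (hIsub hxI)
        rw [Finset.mem_Icc]
        omega
      · rw [Finset.insert_erase hmem]
        exact hJI
    · -- j maps into A.filter (≠ ∅)
      intro x hx
      simp only [Finset.mem_sigma, Finset.mem_filter, Finset.mem_powerset] at hx
      obtain ⟨hk, hsub, hJx⟩ := hx
      simp only [hA, Finset.mem_filter, Finset.mem_powerset]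
      have hk' := Finset.mem_Icc.1 hk
      refine ⟨⟨?_, hJx⟩, ?_⟩
      · intro y hy
        rcases Finset.mem_insert.1 hy with rfl | hy'
        · exact hk
        · have := Finset.mem_Icc.1 (hsub hy')
          rw [Finset.mem_Icc]; omega
      · exact (Finset.insert_nonempty _ _).ne_empty
    · -- j ∘ i = id
      intro I hI
      simp only [hA, Finset.mem_filter, Finset.mem_powerset] at hI
      have hne : I.Nonempty := Finset.nonempty_iff_ne_empty.2 hI.2
      have hmem : I.sup id ∈ I := by
        have := Finset.max'_mem I hne
        rwa [Finset.max'_eq_sup', Finset.sup'_eq_sup] at this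
      exact Finset.insert_erase hmem
    · -- i ∘ j = id
      intro x hx
      simp only [Finset.mem_sigma, Finset.mem_filter, Finset.mem_powerset] at hx
      obtain ⟨hk, hsub, hJx⟩ := hx
      have hk' := Finset.mem_Icc.1 hk
      have hlt : ∀ y ∈ x.2, y < x.1 := by
        intro y hy
        have := Finset.mem_Icc.1 (hsub hy)
        omega
      have hknotin : x.1 ∉ x.2 := fun hmem => lt_irrefl _ (hlt _ hmem)
      have hmax : (insert x.1 x.2).sup id = x.1 := by
        apply le_antisymm
        · apply Finset.sup_le
          intro y hy
          rcases Finset.mem_insert.1 hy with rfl | hy'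
          · exact le_refl _
          · exact le_of_lt (hlt _ hy')
        · exact Finset.le_sup (f := id) (Finset.mem_insert_self _ _)
      obtain ⟨k, I'⟩ := x
      simp only at hmax hknotin ⊢
      simp only [hmax, Finset.erase_insert hknotin]
    · -- values agree
      intro I hI
      simp only [hA, Finset.mem_filter, Finset.mem_powerset] at hI
      have hne : I.Nonempty := Finset.nonempty_iff_ne_empty.2 hI.2
      have hmem : I.sup id ∈ I := by
        have := Finset.max'_mem I hne
        rwa [Finset.max'_eq_sup', Finset.sup'_eq_sup] at this
      simp only
      rw [Finset.insert_erase hmem]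

end SplitMax

section Field2
variable {K : Type*} [Field K] {Y : K}

lemma gaussMultinomAux_inv {n : ℕ} {l : List ℕ} (h : VChain n l)
    (hY1 : ∀ i : ℕ, 1 ≤ i → (1 : K) - Y ^ i ≠ 0) (hY : Y ≠ 0) :
    gaussMultinomAux Y⁻¹ n l = (Y ^ eAux n l)⁻¹ * gaussMultinomAux Y n l := by
  induction l generalizing n with
  | nil => simp [gaussMultinomAux, eAux]
  | cons i is ih =>
    have hi : 1 ≤ i ∧ i < n := h.2 i List.mem_cons_self
    rw [gaussMultinomAux, gaussMultinomAux, gaussBinom_inv hY1 (le_of_lt hi.2) hY,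
      ih (vchain_tail h), eAux, pow_add, mul_inv]
    ring

lemma gaussMultinom_empty (n : ℕ) : gaussMultinom Y n ∅ = 1 := by
  simp [gaussMultinom, gaussMultinomAux]

lemma cSet_empty (n : ℕ) : cSet n ∅ = n.choose 2 := by
  simp [cSet, cAux]

lemma gaussMultinom_insert {n k : ℕ} {I : Finset ℕ} (hk : ∀ x ∈ I, x < k) :
    gaussMultinom Y n (insert k I) = gaussBinom Y n k * gaussMultinom Y k I := by
  rw [gaussMultinom, sortRev_insert_top hk, gaussMultinomAux, gaussMultinom]

lemma cSet_insert {n k : ℕ} {I : Finset ℕ} (hk : ∀ x ∈ I, x < k) :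
    cSet n (insert k I) = (n - k).choose 2 + cSet k I := by
  rw [cSet, sortRev_insert_top hk, cAux, cSet]

lemma gaussMultinom_inv {n : ℕ} {I : Finset ℕ} (hI : ∀ x ∈ I, 1 ≤ x ∧ x < n)
    (hY1 : ∀ i : ℕ, 1 ≤ i → (1 : K) - Y ^ i ≠ 0) (hY : Y ≠ 0) :
    gaussMultinom Y⁻¹ n I = Y ^ cSet n I * (Y ^ n.choose 2)⁻¹ * gaussMultinom Y n I := by
  have hv := vchain_of_subset hI
  have hec := eAux_add_cAux hv
  rw [gaussMultinom, gaussMultinomAux_inv hv hY1 hY, gaussMultinom, cSet]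
  set l := (I.sort (· ≤ ·)).reverse
  have h2 : (Y ^ eAux n l)⁻¹ = Y ^ cAux n l * (Y ^ n.choose 2)⁻¹ := by
    rw [show Y ^ n.choose 2 = Y ^ eAux n l * Y ^ cAux n l from by
      rw [← pow_add, hec], mul_inv, mul_comm (Y ^ eAux n l)⁻¹, ← mul_assoc,
      mul_inv_cancel₀ (pow_ne_zero _ hY), one_mul]
  rw [h2]

/-- The key alternating-sum identity for Gaussian multinomials. -/
theorem Tsum (hY1 : ∀ i : ℕ, 1 ≤ i → (1 : K) - Y ^ i ≠ 0) (h : ℕ) :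
    1 ≤ h → ∀ J : Finset ℕ, J ⊆ Finset.Icc 1 (h - 1) →
    ∑ I ∈ (Finset.Icc 1 (h - 1)).powerset.filter (fun I => J ⊆ I),
        (-1 : K) ^ I.card * Y ^ cSet h I * gaussMultinom Y h I
      = (-1) ^ (h - 1) * gaussMultinom Y h J := by
  induction h using Nat.strong_induction_on with
  | _ h ih =>
  intro hh J hJ
  rw [show (Finset.Icc 1 (h - 1)).powerset.filter (fun I => J ⊆ I) =
      (Finset.Icc 1 (h - 1)).powerset.filter (fun I => J ⊆ I) from rfl,
    sum_split_max (h - 1) J (fun I => (-1 : K) ^ I.card * Y ^ cSet h I * gaussMultinom Y h I)]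
  -- inner sums
  have inner : ∀ k ∈ Finset.Icc 1 (h - 1),
      (∑ I ∈ (Finset.Icc 1 (k - 1)).powerset.filter (fun I => J ⊆ insert k I),
        (-1 : K) ^ (insert k I).card * Y ^ cSet h (insert k I) * gaussMultinom Y h (insert k I))
      = if J ⊆ Finset.Icc 1 k then
          (-1) ^ k * Y ^ ((h - k).choose 2) * gaussBinom Y h k *
            gaussMultinom Y k (J.erase k)
        else 0 := by
    intro k hk
    have hk' := Finset.mem_Icc.1 hk
    have hterm : ∀ I ∈ (Finset.Icc 1 (k - 1)).powerset,
        (-1 : K) ^ (insert k I).card * Y ^ cSet h (insert k I) *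
            gaussMultinom Y h (insert k I)
          = (-(Y ^ ((h - k).choose 2) * gaussBinom Y h k)) *
            ((-1) ^ I.card * Y ^ cSet k I * gaussMultinom Y k I) := by
      intro I hI
      rw [Finset.mem_powerset] at hI
      have hlt : ∀ x ∈ I, x < k := by
        intro x hx
        have := Finset.mem_Icc.1 (hI hx)
        omega
      have hknotin : k ∉ I := fun hmem => lt_irrefl _ (hlt _ hmem)
      rw [Finset.card_insert_of_notMem hknotin, cSet_insert hlt, gaussMultinom_insert hlt,
        pow_add, pow_add, pow_succ]
      ring
    by_cases hJk : J ⊆ Finset.Icc 1 k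
    · rw [if_pos hJk]
      have herase : J.erase k ⊆ Finset.Icc 1 (k - 1) := by
        intro x hx
        have hxJ := Finset.mem_of_mem_erase hx
        have hxk := Finset.ne_of_mem_erase hx
        have := Finset.mem_Icc.1 (hJk hxJ)
        rw [Finset.mem_Icc]; omega
      have hfe : (Finset.Icc 1 (k - 1)).powerset.filter (fun I => J ⊆ insert k I)
          = (Finset.Icc 1 (k - 1)).powerset.filter (fun I => J.erase k ⊆ I) := by
        apply Finset.filter_congr
        intro I hI
        rw [Finset.mem_powerset] at hI
        constructor
        · intro hsub x hx
          have hxJ := Finset.mem_of_mem_erase hx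
          have hxk := Finset.ne_of_mem_erase hx
          rcases Finset.mem_insert.1 (hsub hxJ) with rfl | hxI
          · exact absurd rfl hxk
          · exact hxI
        · intro hsub x hx
          by_cases hxk : x = k
          · subst hxk; exact Finset.mem_insert_self _ _
          · exact Finset.mem_insert_of_mem (hsub (Finset.mem_erase.2 ⟨hxk, hx⟩))
      rw [hfe, Finset.sum_congr rfl fun I hI =>
        hterm I (Finset.mem_of_mem_filter I hI), ← Finset.mul_sum,
        ih k (by omega) (by omega) (J.erase k) herase]
      have : ((-1 : K)) ^ k = -(-1 : K) ^ (k - 1) := by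
        rw [show k = (k - 1) + 1 from by omega, pow_succ]
        simp
      rw [this]
      ring
    · rw [if_neg hJk]
      rw [Finset.filter_false_of_mem, Finset.sum_empty]
      intro I hI
      rw [Finset.mem_powerset] at hI
      intro hsub
      apply hJk
      intro x hx
      rcases Finset.mem_insert.1 (hsub hx) with rfl | hxI
      · rw [Finset.mem_Icc]; omega
      · have := Finset.mem_Icc.1 (hI hxI)
        rw [Finset.mem_Icc]; omega
  rw [Finset.sum_congr rfl inner]
  by_cases hJe : J = ∅
  · subst hJe
    rw [if_pos rfl]
    simp only [Finset.empty_subset, if_true, Finset.erase_empty, gaussMultinom_empty,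
      Finset.card_empty, pow_zero, cSet_empty, one_mul, mul_one]
    have hrange : Finset.range h = insert 0 (Finset.Icc 1 (h - 1)) := by
      ext x
      simp only [Finset.mem_range, Finset.mem_insert, Finset.mem_Icc]
      omega
    have hpartial := Asum_partial hY1 (n := h) hh
    rw [hrange, Finset.sum_insert (by simp)] at hpartial
    simp only [pow_zero, Nat.sub_zero, one_mul, gaussBinom_zero, mul_one] at hpartial
    exact hpartial
  · rw [if_neg hJe, zero_add]
    have hne : J.Nonempty := Finset.nonempty_iff_ne_empty.2 hJe
    set m := J.sup id with hm
    have hmJ : m ∈ J := by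
      have := Finset.max'_mem J hne
      rwa [Finset.max'_eq_sup', Finset.sup'_eq_sup] at this
    have hmIcc := Finset.mem_Icc.1 (hJ hmJ)
    have hlem : ∀ x ∈ J, x ≤ m := fun x hx => Finset.le_sup (f := id) hx
    have heraselt : ∀ x ∈ J.erase m, x < m := by
      intro x hx
      have h1 := Finset.mem_of_mem_erase hx
      have h2 := Finset.ne_of_mem_erase hx
      have := hlem x h1
      omega
    have hcondm : ∀ k : ℕ, 1 ≤ k → (J ⊆ Finset.Icc 1 k ↔ m ≤ k) := by
      intro k hk1
      constructor
      · intro hs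
        exact (Finset.mem_Icc.1 (hs hmJ)).2
      · intro hmk x hx
        have := Finset.mem_Icc.1 (hJ hx)
        have := hlem x hx
        rw [Finset.mem_Icc]
        omega
    -- rewrite each term via the condition m ≤ k
    have hterm2 : ∀ k ∈ Finset.Icc 1 (h - 1),
        (if J ⊆ Finset.Icc 1 k then
          (-1 : K) ^ k * Y ^ ((h - k).choose 2) * gaussBinom Y h k *
            gaussMultinom Y k (J.erase k)
        else 0)
        = if m ≤ k then
            (-1 : K) ^ k * Y ^ ((h - k).choose 2) *
              (gaussBinom Y h m * gaussBinom Y (h - m) (k - m)) *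
              gaussMultinom Y m (J.erase m)
          else 0 := by
      intro k hk
      have hk' := Finset.mem_Icc.1 hk
      rw [if_congr (hcondm k hk'.1) rfl rfl]
      by_cases hmk : m ≤ k
      · rw [if_pos hmk, if_pos hmk]
        have hdec : gaussMultinom Y k (J.erase k)
            = gaussBinom Y k m * gaussMultinom Y m (J.erase m) := by
          rcases eq_or_lt_of_le hmk with rfl | hlt
          · simp [gaussBinom_self _ hY1]
          · have hkJ : k ∉ J := fun hkmem => absurd (hlem k hkmem) (by omega)
            rw [Finset.erase_eq_of_notMem hkJ,
              show J = insert m (J.erase m) from (Finset.insert_erase hmJ).symm]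
            rw [Finset.erase_insert (fun hmem => lt_irrefl _ (heraselt _ hmem))]
            exact gaussMultinom_insert heraselt
        rw [hdec, ← mul_assoc, mul_assoc ((-1 : K) ^ k * Y ^ ((h - k).choose 2)),
          gaussBinom_mul_gaussBinom hY1 hmk (by omega)]
        try ring
      · rw [if_neg hmk, if_neg hmk]
    rw [Finset.sum_congr rfl hterm2]
    rw [Finset.sum_ite, Finset.sum_const_zero, add_zero]
    have hfi : (Finset.Icc 1 (h - 1)).filter (fun k => m ≤ k)
        = (Finset.range (h - m)).image (fun j => j + m) := by
      ext x
      simp only [Finset.mem_filter, Finset.mem_Icc, Finset.mem_image, Finset.mem_range]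
      constructor
      · intro hx; exact ⟨x - m, by omega, by omega⟩
      · rintro ⟨j, hj, rfl⟩; omega
    rw [hfi, Finset.sum_image (by intro a _ b _ hab; simp only at hab; omega)]
    have hsum2 : ∀ j ∈ Finset.range (h - m),
        (-1 : K) ^ (j + m) * Y ^ ((h - (j + m)).choose 2) *
            (gaussBinom Y h m * gaussBinom Y (h - m) (j + m - m)) *
            gaussMultinom Y m (J.erase m)
          = ((-1 : K) ^ m * gaussBinom Y h m * gaussMultinom Y m (J.erase m)) *
            ((-1 : K) ^ j * Y ^ ((h - m - j).choose 2) * gaussBinom Y (h - m) j) := by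
      intro j hj
      rw [show j + m - m = j from by omega, show h - (j + m) = h - m - j from by omega,
        pow_add]
      ring
    rw [Finset.sum_congr rfl hsum2, ← Finset.mul_sum,
      Asum_partial hY1 (n := h - m) (by omega)]
    have hJdec : gaussMultinom Y h J = gaussBinom Y h m * gaussMultinom Y m (J.erase m) := by
      rw [show J = insert m (J.erase m) from (Finset.insert_erase hmJ).symm]
      rw [Finset.erase_insert (fun hmem => lt_irrefl _ (heraselt _ hmem))]
      exact gaussMultinom_insert heraselt
    rw [hJdec]
    have hsgn : ((-1 : K)) ^ m * (-1 : K) ^ (h - m - 1) = (-1 : K) ^ (h - 1) := by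
      rw [← pow_add, show m + (h - m - 1) = h - 1 from by omega]
    calc ((-1 : K) ^ m * gaussBinom Y h m * gaussMultinom Y m (J.erase m)) *
          (-1 : K) ^ (h - m - 1)
        = ((-1 : K) ^ m * (-1 : K) ^ (h - m - 1)) *
            (gaussBinom Y h m * gaussMultinom Y m (J.erase m)) := by ring
      _ = (-1 : K) ^ (h - 1) * (gaussBinom Y h m * gaussMultinom Y m (J.erase m)) := by
          rw [hsgn]

end Field2

section Swap
variable {M : Type*} [AddCommMonoid M]

lemma sum_powerset_swap (s : Finset ℕ) (t : Finset ℕ → Finset ℕ → M) :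
    ∑ I ∈ s.powerset, ∑ J ∈ I.powerset, t I J =
      ∑ J ∈ s.powerset, ∑ I ∈ s.powerset.filter (fun I => J ⊆ I), t I J := by
  classical
  have step1 : ∀ I ∈ s.powerset, ∑ J ∈ I.powerset, t I J
      = ∑ J ∈ s.powerset, if J ⊆ I then t I J else 0 := by
    intro I hI
    rw [Finset.mem_powerset] at hI
    rw [← Finset.sum_filter]
    congr 1
    ext J
    simp only [Finset.mem_filter, Finset.mem_powerset]
    constructor
    · intro hJ; exact ⟨hJ.trans hI, hJ⟩
    · exact fun hJ => hJ.2
  rw [Finset.sum_congr rfl step1, Finset.sum_comm]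
  refine Finset.sum_congr rfl fun J hJ => ?_
  rw [Finset.sum_filter]

end Swap

theorem igusaCirc_funEq_field {K : Type*} [Field K] {Y : K} {X : ℕ → K} (h : ℕ) (hh : 1 ≤ h)
    (hY : Y ≠ 0) (hY1 : ∀ i : ℕ, 1 ≤ i → (1 : K) - Y ^ i ≠ 0)
    (hX : ∀ i, X i ≠ 0) (hX1 : ∀ i, (1 : K) - X i ≠ 0) :
    igusaCirc h Y⁻¹ (fun i => (X i)⁻¹) =
      (-1) ^ h * (X h)⁻¹ * (Y ^ (h * (h - 1) / 2))⁻¹ * igusaCirc h Y X := by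
  classical
  have hXinv_ne : ∀ i : ℕ, (1 : K) - (X i)⁻¹ ≠ 0 := by
    intro i hz
    rw [sub_eq_zero, eq_comm, inv_eq_one] at hz
    exact hX1 i (by rw [hz, sub_self])
  have key2 : ∀ i : ℕ, (X i)⁻¹ / (1 - (X i)⁻¹) = -(X i / (1 - X i) + 1) := by
    intro i
    have h1 := hX i
    have h2 := hX1 i
    have hx2 : X i - 1 ≠ 0 := fun hz =>
      h2 (by rw [show (1 : K) - X i = -(X i - 1) from by ring, hz, neg_zero])
    have e : 1 - (X i)⁻¹ = (X i)⁻¹ * (X i - 1) := by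
      rw [mul_sub, inv_mul_cancel₀ h1, mul_one]
    rw [e, div_mul_eq_div_div, div_self (inv_ne_zero h1)]
    field_simp
    ring
  have key1 : (X h)⁻¹ * (1 - (X h)⁻¹)⁻¹ = -(1 - X h)⁻¹ := by
    have h1 := hX h
    have h2 := hX1 h
    have h3 := hXinv_ne h
    field_simp
    rw [show X h - 1 = -(1 - X h) from by ring, div_neg, div_self h2]
  have hptwise : ∀ I ∈ (Finset.Icc 1 (h - 1)).powerset,
      gaussMultinom Y⁻¹ h I * ∏ i ∈ I, (X i)⁻¹ / (1 - (X i)⁻¹)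
        = (Y ^ h.choose 2)⁻¹ * ∑ J ∈ I.powerset,
            ((-1) ^ I.card * Y ^ cSet h I * gaussMultinom Y h I *
              ∏ i ∈ J, X i / (1 - X i)) := by
    intro I hI
    rw [Finset.mem_powerset] at hI
    have hmem : ∀ x ∈ I, 1 ≤ x ∧ x < h := by
      intro x hx
      have := Finset.mem_Icc.1 (hI hx)
      omega
    have hprod : (∏ i ∈ I, (X i)⁻¹ / (1 - (X i)⁻¹))
        = (-1) ^ I.card * ∑ J ∈ I.powerset, ∏ i ∈ J, X i / (1 - X i) := by
      rw [Finset.prod_congr rfl fun i _ => key2 i]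
      have : ∀ i ∈ I, -(X i / (1 - X i) + 1) = (-1) * (X i / (1 - X i) + 1) := by
        intro i _; ring
      rw [Finset.prod_congr rfl this, Finset.prod_mul_distrib, Finset.prod_const]
      congr 1
      rw [Finset.prod_add]
      apply Finset.sum_congr rfl
      intro J hJ
      simp
    rw [gaussMultinom_inv hmem hY1 hY, hprod, Finset.mul_sum, Finset.mul_sum,
      Finset.mul_sum]
    apply Finset.sum_congr rfl
    intro J hJ
    ring
  have hbig : ∑ I ∈ (Finset.Icc 1 (h - 1)).powerset,
      gaussMultinom Y⁻¹ h I * ∏ i ∈ I, (X i)⁻¹ / (1 - (X i)⁻¹)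
    = (Y ^ h.choose 2)⁻¹ * ((-1) ^ (h - 1) *
        ∑ J ∈ (Finset.Icc 1 (h - 1)).powerset,
          gaussMultinom Y h J * ∏ i ∈ J, X i / (1 - X i)) := by
    rw [Finset.sum_congr rfl hptwise, ← Finset.mul_sum,
      sum_powerset_swap (Finset.Icc 1 (h - 1))
        (fun I J => (-1) ^ I.card * Y ^ cSet h I * gaussMultinom Y h I *
          ∏ i ∈ J, X i / (1 - X i))]
    congr 1
    rw [Finset.mul_sum]
    apply Finset.sum_congr rfl
    intro J hJ
    rw [Finset.mem_powerset] at hJ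
    rw [← Finset.sum_mul, Tsum hY1 h hh J hJ]
    ring
  rw [igusaCirc, igusa, igusaCirc, igusa]
  rw [hbig, show h * (h - 1) / 2 = h.choose 2 from (Nat.choose_two_right h).symm]
  set S := ∑ J ∈ (Finset.Icc 1 (h - 1)).powerset,
    gaussMultinom Y h J * ∏ i ∈ J, X i / (1 - X i) with hS
  have hsgn : ((-1 : K)) ^ h = -(-1 : K) ^ (h - 1) := by
    rw [show h = (h - 1) + 1 from by omega, pow_succ]
    simp
  rw [hsgn]
  have hcancel : (X h)⁻¹ * X h = 1 := inv_mul_cancel₀ (hX h)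
  linear_combination (((-1 : K) ^ (h - 1)) * (Y ^ h.choose 2)⁻¹ * (1 - X h)⁻¹ * S) * hcancel +
    ((Y ^ h.choose 2)⁻¹ * (-1 : K) ^ (h - 1) * S) * key1

end

/-- Functional equation for the Igusa function `I_h^∘`:
`I_h^∘(Y⁻¹; X_1⁻¹,…,X_h⁻¹) = (-1)^h · X_h⁻¹ · Y^{-h(h-1)/2} · I_h^∘(Y; X_1,…,X_h)`
in the field of rational functions `ℚ(Y, X_1, …, X_h)` (here `Y` is the variable with
index `0` and `X_i` the variable with index `i`). -/
theorem igusaCirc_funEq (h : ℕ) (hh : 0 < h) :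
    igusaCirc h
        (algebraMap (MvPolynomial ℕ ℚ) (FractionRing (MvPolynomial ℕ ℚ))
          (MvPolynomial.X 0))⁻¹
        (fun i => (algebraMap (MvPolynomial ℕ ℚ) (FractionRing (MvPolynomial ℕ ℚ))
          (MvPolynomial.X i))⁻¹) =
      (-1) ^ h *
        (algebraMap (MvPolynomial ℕ ℚ) (FractionRing (MvPolynomial ℕ ℚ))
            (MvPolynomial.X h))⁻¹ *
        (algebraMap (MvPolynomial ℕ ℚ) (FractionRing (MvPolynomial ℕ ℚ))
            (MvPolynomial.X 0) ^ (h * (h - 1) / 2))⁻¹ *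
        igusaCirc h
          (algebraMap (MvPolynomial ℕ ℚ) (FractionRing (MvPolynomial ℕ ℚ))
            (MvPolynomial.X 0))
          (fun i => algebraMap (MvPolynomial ℕ ℚ) (FractionRing (MvPolynomial ℕ ℚ))
            (MvPolynomial.X i)) := by
  have hinj : Function.Injective
      (algebraMap (MvPolynomial ℕ ℚ) (FractionRing (MvPolynomial ℕ ℚ))) :=
    IsFractionRing.injective _ _
  have halg : ∀ p : MvPolynomial ℕ ℚ, p ≠ 0 →
      algebraMap (MvPolynomial ℕ ℚ) (FractionRing (MvPolynomial ℕ ℚ)) p ≠ 0 :=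
    fun p hp hz => hp (hinj (by rw [hz, map_zero]))
  have hconst : ∀ p : MvPolynomial ℕ ℚ, MvPolynomial.constantCoeff p ≠ 0 → p ≠ 0 :=
    fun p hc hz => hc (by rw [hz, map_zero])
  exact igusaCirc_funEq_field (X := fun i => algebraMap (MvPolynomial ℕ ℚ)
      (FractionRing (MvPolynomial ℕ ℚ)) (MvPolynomial.X i)) h hh
    (halg _ (MvPolynomial.X_ne_zero 0))
    (by
      intro i hi
      rw [show (1 : FractionRing (MvPolynomial ℕ ℚ)) -
          (algebraMap (MvPolynomial ℕ ℚ) _ (MvPolynomial.X 0)) ^ i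
          = algebraMap (MvPolynomial ℕ ℚ) _ (1 - MvPolynomial.X 0 ^ i) from by
        rw [map_sub, map_one, map_pow]]
      apply halg
      apply hconst
      rw [map_sub, map_one, map_pow, MvPolynomial.constantCoeff_X,
        zero_pow (by omega), sub_zero]
      exact one_ne_zero)
    (fun i => halg _ (MvPolynomial.X_ne_zero i))
    (by
      intro i
      rw [show (1 : FractionRing (MvPolynomial ℕ ℚ)) -
          algebraMap (MvPolynomial ℕ ℚ) _ (MvPolynomial.X i)
          = algebraMap (MvPolynomial ℕ ℚ) _ (1 - MvPolynomial.X i) from by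
        rw [map_sub, map_one]]
      apply halg
      apply hconst
      rw [map_sub, map_one, MvPolynomial.constantCoeff_X, sub_zero]
      exact one_ne_zero)
end

section
/- For every h ∈ ℕ, I_h(1; X, X^2, …, X^h) = (1−X)^{−h} as rational functions in the single variable X over ℚ, i.e. substituting X_i := X^i for i = 1,…,h into the Igusa function at Y = 1 gives 1/(1−X)^h. -/
section aux

private lemma sort_insert_max' {k : ℕ} {I : Finset ℕ} (h : ∀ b ∈ I, b < k) :
    (insert k I).sort (· ≤ ·) = I.sort (· ≤ ·) ++ [k] := by
  have hk : k ∉ I := fun hkI => lt_irrefl k (h k hkI)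
  have hperm : List.Perm ((insert k I).sort (· ≤ ·)) (I.sort (· ≤ ·) ++ [k]) := by
    have : ((insert k I).sort (· ≤ ·) : Multiset ℕ) = (k :: I.sort (· ≤ ·) : List ℕ) := by
      rw [Finset.sort_eq, Finset.insert_val, Multiset.ndinsert_of_notMem hk,
        ← Finset.sort_eq (α := ℕ) (r := (· ≤ ·)) (s := I), Multiset.cons_coe]
    rw [Multiset.coe_eq_coe] at this
    exact this.trans (List.perm_append_singleton k _).symm
  refine List.Perm.eq_of_pairwise' (Finset.pairwise_sort _ _) ?_ hperm
  rw [List.pairwise_append]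
  refine ⟨Finset.pairwise_sort _ _, List.pairwise_singleton _ k, ?_⟩
  intro a ha b hb
  simp at hb; subst hb
  exact (h a ((Finset.mem_sort _).mp ha)).le

private lemma multinom_insert_max' {n k : ℕ} {I : Finset ℕ} (h : ∀ b ∈ I, b < k) :
    multinom n (insert k I) = n.choose k * multinom k I := by
  unfold multinom
  rw [sort_insert_max' h, List.reverse_append]
  rfl

private lemma one_sub_X_pow_ne' {i : ℕ} (hi : 1 ≤ i) :
    (1 - (RatFunc.X : RatFunc ℚ) ^ i) ≠ 0 := by
  intro hc
  have h1 : (RatFunc.X : RatFunc ℚ) ^ i = 1 := by linear_combination -hc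
  have h2 : algebraMap (Polynomial ℚ) (RatFunc ℚ) (Polynomial.X ^ i) =
      algebraMap (Polynomial ℚ) (RatFunc ℚ) 1 := by
    simpa [map_pow, RatFunc.algebraMap_X] using h1
  have h3 : (Polynomial.X : Polynomial ℚ) ^ i = 1 :=
    IsFractionRing.injective (Polynomial ℚ) (RatFunc ℚ) h2
  have := congrArg Polynomial.natDegree h3
  simp [Polynomial.natDegree_X_pow] at this
  omega

private lemma key_sum' (k : ℕ) : ∀ n : ℕ,
    ∑ I ∈ (Finset.Icc 1 k).powerset, (multinom n I : RatFunc ℚ) *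
        ∏ i ∈ I, (RatFunc.X : RatFunc ℚ) ^ i / (1 - (RatFunc.X : RatFunc ℚ) ^ i)
      = ∑ j ∈ Finset.range (k + 1), (n.choose j : RatFunc ℚ) *
          ((RatFunc.X : RatFunc ℚ) / (1 - RatFunc.X)) ^ j := by
  induction k with
  | zero =>
    intro n
    rw [show Finset.Icc 1 0 = (∅ : Finset ℕ) by simp]
    simp [multinom, multinomAux]
  | succ k ih =>
    intro n
    set X : RatFunc ℚ := RatFunc.X with hXdef
    have hIcc : Finset.Icc 1 (k + 1) = insert (k + 1) (Finset.Icc 1 k) := by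
      ext x; simp [Finset.mem_Icc]; omega
    have hnotmem : (k + 1) ∉ Finset.Icc 1 k := by simp
    rw [hIcc, Finset.sum_powerset_insert hnotmem]
    have hins : ∀ I ∈ (Finset.Icc 1 k).powerset,
        (multinom n (insert (k + 1) I) : RatFunc ℚ) *
          ∏ i ∈ insert (k + 1) I, X ^ i / (1 - X ^ i)
        = (n.choose (k + 1) : RatFunc ℚ) * (X ^ (k + 1) / (1 - X ^ (k + 1))) *
            ((multinom (k + 1) I : RatFunc ℚ) * ∏ i ∈ I, X ^ i / (1 - X ^ i)) := by
      intro I hI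
      rw [Finset.mem_powerset] at hI
      have hlt : ∀ b ∈ I, b < k + 1 := fun b hb => by
        have := hI hb; simp [Finset.mem_Icc] at this; omega
      have hknI : (k + 1) ∉ I := fun hmem => lt_irrefl _ (hlt _ hmem)
      rw [multinom_insert_max' hlt, Finset.prod_insert hknI]
      push_cast
      ring
    rw [Finset.sum_congr rfl hins, ← Finset.mul_sum, ih (k + 1)]
    rw [ih n]
    have hne1 : (1 - X) ≠ 0 := by simpa using one_sub_X_pow_ne' (i := 1) le_rfl
    have hnek : (1 - X ^ (k + 1)) ≠ 0 := one_sub_X_pow_ne' (by omega)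
    have hpow : ((X / (1 - X)) + 1) ^ (k + 1)
        = ∑ j ∈ Finset.range (k + 2), ((k + 1).choose j : RatFunc ℚ) * (X / (1 - X)) ^ j := by
      rw [add_pow]
      exact Finset.sum_congr rfl fun j hj => by ring
    have hS : ∑ j ∈ Finset.range (k + 1), ((k + 1).choose j : RatFunc ℚ) * (X / (1 - X)) ^ j
        = ((X / (1 - X)) + 1) ^ (k + 1) - (X / (1 - X)) ^ (k + 1) := by
      have h2 := Finset.sum_range_succ
        (fun j => ((k + 1).choose j : RatFunc ℚ) * (X / (1 - X)) ^ j) (k + 1)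
      rw [hpow, h2]; simp
    rw [Finset.sum_range_succ (fun j => (n.choose j : RatFunc ℚ) * (X / (1 - X)) ^ j) (k + 1),
      hS]
    have hkey : X ^ (k + 1) / (1 - X ^ (k + 1)) *
        (((X / (1 - X)) + 1) ^ (k + 1) - (X / (1 - X)) ^ (k + 1)) = (X / (1 - X)) ^ (k + 1) := by
      have hu1 : (X / (1 - X)) + 1 = (1 - X)⁻¹ := by field_simp; ring
      rw [hu1, div_pow, inv_pow]
      field_simp
    rw [mul_assoc, hkey]
end aux
/-- `I_h(1; X, X², …, X^h) = (1 - X)^{-h}` as rational functions in `X` over `ℚ`. -/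
theorem igusaOne_geometric (h : ℕ) (hh : 0 < h) :
    igusaOne h (fun i => (RatFunc.X : RatFunc ℚ) ^ i) =
      ((1 - (RatFunc.X : RatFunc ℚ)) ^ h)⁻¹ := by
  set X : RatFunc ℚ := RatFunc.X with hXdef
  unfold igusaOne
  have hk := key_sum' (h - 1) h
  rw [show h - 1 + 1 = h from by omega] at hk
  simp only []
  rw [hk]
  have hne1 : (1 - X) ≠ 0 := by simpa using one_sub_X_pow_ne' (i := 1) le_rfl
  have hneh : (1 - X ^ h) ≠ 0 := one_sub_X_pow_ne' hh
  have hpow : ((X / (1 - X)) + 1) ^ h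
      = ∑ j ∈ Finset.range (h + 1), (h.choose j : RatFunc ℚ) * (X / (1 - X)) ^ j := by
    rw [add_pow]
    exact Finset.sum_congr rfl fun j hj => by ring
  have hS : ∑ j ∈ Finset.range h, (h.choose j : RatFunc ℚ) * (X / (1 - X)) ^ j
      = ((X / (1 - X)) + 1) ^ h - (X / (1 - X)) ^ h := by
    have h2 := Finset.sum_range_succ
      (fun j => (h.choose j : RatFunc ℚ) * (X / (1 - X)) ^ j) h
    rw [hpow, h2]; simp
  rw [hS]
  have hu1 : (X / (1 - X)) + 1 = (1 - X)⁻¹ := by field_simp; ring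
  rw [hu1, div_pow, inv_pow]
  field_simp
end

section
/- Let p be a prime, g ∈ ℕ, f = (f_1,…,f_g) ∈ ℕ^g, W_i = W(𝔽_{p^{f_i}}) the ring of Witt vectors over the field with p^{f_i} elements, and R = W_1 × ⋯ × W_g. Let Λ ≤ R⊕R be an additive subgroup of finite index, and for i ∈ {1,…,g} let ε_i(Λ) be the largest e ∈ ℕ_0 with π_i(Λ) ⊆ p^e(W_i⊕W_i), where π_i : R⊕R → W_i⊕W_i is the projection. Then the additive subgroup of R generated by {a·b' − a'·b : (a,b) ∈ Λ, (a',b') ∈ R⊕R} equals p^{ε_1(Λ)}W_1 × ⋯ × p^{ε_g(Λ)}W_g; consequently the quotient of R by this subgroup is isomorphic as an abelian group to ∏_{i=1}^g (ℤ/p^{ε_i(Λ)}ℤ)^{f_i}. -/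
namespace HeisAux

open WittVector

variable {p : ℕ} [hp : Fact p.Prime] {k : Type*} [Field k] [CharP k p]

theorem coeff_pow_p_mul (n : ℕ) (y : WittVector p k) :
    ∀ i < n, ((p : WittVector p k) ^ n * y).coeff i = 0 := by
  induction n with
  | zero => intro i hi; omega
  | succ n ih =>
    intro i hi
    have h : (p : WittVector p k) ^ (n+1) * y = ((p : WittVector p k) ^ n * y) * p := by ring
    rw [h]
    cases i with
    | zero => exact mul_charP_coeff_zero _
    | succ i =>
      rw [mul_charP_coeff_succ, ih i (by omega), zero_pow hp.out.ne_zero]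

theorem coeff_mul_pow_p (n : ℕ) (b : WittVector p k) :
    (b * (p : WittVector p k) ^ n).coeff n = b.coeff 0 ^ p ^ n := by
  induction n with
  | zero => simp
  | succ n ih =>
    have h : b * (p : WittVector p k) ^ (n+1) = (b * (p : WittVector p k) ^ n) * p := by ring
    rw [h, mul_charP_coeff_succ, ih, ← pow_mul, pow_succ]

theorem pow_p_dvd_iff [PerfectRing k p] (n : ℕ) (x : WittVector p k) :
    (p : WittVector p k) ^ n ∣ x ↔ ∀ i < n, x.coeff i = 0 := by
  constructor
  · rintro ⟨y, rfl⟩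
    exact coeff_pow_p_mul n y
  · intro h
    by_cases hx : x = 0
    · simp [hx]
    obtain ⟨m, b, hb, rfl⟩ := WittVector.exists_eq_pow_p_mul x hx
    have hnm : n ≤ m := by
      by_contra hlt
      have h2 := h m (by omega)
      rw [mul_comm, coeff_mul_pow_p] at h2
      exact hb (pow_eq_zero_iff (pow_ne_zero _ hp.out.ne_zero) |>.mp h2)
    exact Dvd.dvd.mul_right (pow_dvd_pow _ hnm) b

/-- The additive subgroup of multiples of `p^e` in `𝕎 k`. -/
def Dsub' (e : ℕ) : AddSubgroup (WittVector p k) where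
  carrier := {x | (p : WittVector p k) ^ e ∣ x}
  zero_mem' := dvd_zero _
  add_mem' := dvd_add
  neg_mem' := fun h => dvd_neg.mpr h

theorem mem_Dsub' {e : ℕ} {x : WittVector p k} :
    x ∈ (Dsub' e : AddSubgroup (WittVector p k)) ↔ (p : WittVector p k) ^ e ∣ x := Iff.rfl

theorem smul_iff_dvd (e : ℕ) (z : WittVector p k) :
    (∃ w, p ^ e • w = z) ↔ (p : WittVector p k) ^ e ∣ z := by
  constructor
  · rintro ⟨w, rfl⟩
    refine ⟨w, ?_⟩
    rw [nsmul_eq_mul]; push_cast; ring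
  · rintro ⟨w, rfl⟩
    refine ⟨w, ?_⟩
    rw [nsmul_eq_mul]; push_cast; ring

noncomputable def quotEquivTrunc [PerfectRing k p] (e : ℕ) :
    (WittVector p k ⧸ (Dsub' e : AddSubgroup (WittVector p k))) ≃+ TruncatedWittVector p e k := by
  have hker : ((WittVector.truncate e : WittVector p k →+* _).toAddMonoidHom).ker = Dsub' e := by
    ext x
    rw [AddMonoidHom.mem_ker]
    change (truncate e) x = 0 ↔ _
    rw [← RingHom.mem_ker, WittVector.mem_ker_truncate]
    exact (pow_p_dvd_iff e x).symm
  exact (QuotientAddGroup.quotientAddEquivOfEq hker.symm).trans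
    (QuotientAddGroup.quotientKerEquivOfSurjective _
      (WittVector.truncate_surjective p e k))

theorem card_quot [PerfectRing k p] [Finite k] (e : ℕ) :
    Nat.card (WittVector p k ⧸ (Dsub' e : AddSubgroup (WittVector p k))) = Nat.card k ^ e := by
  rw [Nat.card_congr (quotEquivTrunc (p := p) (k := k) e).toEquiv]
  show Nat.card (Fin e → k) = Nat.card k ^ e
  rw [Nat.card_fun, Nat.card_eq_fintype_card (α := Fin e), Fintype.card_fin]

theorem quot_exponent (e : ℕ) (x : WittVector p k ⧸ (Dsub' e : AddSubgroup (WittVector p k))) :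
    p ^ e • x = 0 := by
  induction x using QuotientAddGroup.induction_on with
  | H y =>
    rw [← QuotientAddGroup.mk_nsmul, QuotientAddGroup.eq_zero_iff]
    exact ⟨y, by rw [nsmul_eq_mul]; push_cast; ring⟩

/-- multiplication by `p^(e-1)` composed with the quotient map -/
noncomputable def theta (e : ℕ) :
    WittVector p k →+ (WittVector p k ⧸ (Dsub' e : AddSubgroup (WittVector p k))) :=
  (QuotientAddGroup.mk' _).comp (AddMonoidHom.mk' (fun x => (p : WittVector p k) ^ (e-1) * x)
    (fun a b => mul_add _ a b))

theorem theta_apply (e : ℕ) (x : WittVector p k) :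
    theta (p := p) (k := k) e x = QuotientAddGroup.mk ((p : WittVector p k) ^ (e-1) * x) := rfl

theorem theta_ker (e : ℕ) (he : 1 ≤ e) : (theta (p := p) (k := k) e).ker = Dsub' 1 := by
  ext x
  rw [AddMonoidHom.mem_ker]
  change QuotientAddGroup.mk _ = 0 ↔ _
  rw [QuotientAddGroup.eq_zero_iff, mem_Dsub', mem_Dsub', pow_one]
  have h : (p : WittVector p k) ^ e = (p : WittVector p k) ^ (e-1) * p := by
    rw [← pow_succ]; congr 1; omega
  rw [h]
  exact mul_dvd_mul_iff_left (pow_ne_zero _ (WittVector.p_nonzero p k))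

theorem theta_range (e : ℕ) (he : 1 ≤ e) :
    ((theta (p := p) (k := k) e).range :
      Set (WittVector p k ⧸ (Dsub' e : AddSubgroup (WittVector p k)))) = {x | p • x = 0} := by
  have hpe : (p : WittVector p k) ^ e = p * (p : WittVector p k) ^ (e-1) := by
    rw [mul_comm, ← pow_succ]; congr 1; omega
  ext x
  simp only [AddMonoidHom.coe_range, Set.mem_range, Set.mem_setOf_eq]
  constructor
  · rintro ⟨y, rfl⟩
    rw [theta_apply, ← QuotientAddGroup.mk_nsmul, QuotientAddGroup.eq_zero_iff, mem_Dsub']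
    exact ⟨y, by rw [nsmul_eq_mul, hpe]; push_cast; ring⟩
  · intro hx
    induction x using QuotientAddGroup.induction_on with
    | H y =>
      rw [← QuotientAddGroup.mk_nsmul, QuotientAddGroup.eq_zero_iff, mem_Dsub'] at hx
      rw [nsmul_eq_mul, hpe] at hx
      push_cast at hx
      have hx2 : (p : WittVector p k) ^ (e-1) ∣ y :=
        (mul_dvd_mul_iff_left (WittVector.p_nonzero p k)).mp hx
      obtain ⟨z, rfl⟩ := hx2
      exact ⟨z, rfl⟩

theorem card_tor [PerfectRing k p] [Finite k] (e : ℕ) (he : 1 ≤ e) :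
    Nat.card {x : WittVector p k ⧸ (Dsub' e : AddSubgroup (WittVector p k)) // p • x = 0} =
      Nat.card k := by
  have h1 : Nat.card {x : WittVector p k ⧸ (Dsub' e : AddSubgroup (WittVector p k)) // p • x = 0}
      = Nat.card (theta (p := p) (k := k) e).range := by
    apply Nat.card_congr
    exact Equiv.subtypeEquivRight fun x => (Set.ext_iff.mp (theta_range e he) x).symm
  rw [h1,
    Nat.card_congr (QuotientAddGroup.quotientKerEquivRange (theta (p := p) (k := k) e)).toEquiv.symm,
    theta_ker e he, card_quot, pow_one]

theorem card_zmod_tor {p : ℕ} (hp : p.Prime) (a : ℕ) (ha : 1 ≤ a) :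
    Nat.card {x : ZMod (p ^ a) // p • x = 0} = p := by
  haveI : NeZero (p ^ a) := ⟨pow_ne_zero _ hp.ne_zero⟩
  set N := p ^ a with hN
  set φ : ZMod N →+ ZMod N := AddMonoidHom.mk' (fun x => p • x) (fun x y => smul_add p x y) with hφ
  have hrange : φ.range = AddSubgroup.zmultiples (p : ZMod N) := by
    ext x
    simp only [AddMonoidHom.mem_range, AddSubgroup.mem_zmultiples_iff]
    constructor
    · rintro ⟨y, rfl⟩
      refine ⟨(y.val : ℤ), ?_⟩
      show ((y.val : ℤ) • (p : ZMod N)) = p • y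
      rw [natCast_zsmul, nsmul_eq_mul, nsmul_eq_mul, ZMod.natCast_val, ZMod.cast_id, mul_comm]
    · rintro ⟨n, rfl⟩
      refine ⟨n • 1, ?_⟩
      show p • (n • (1 : ZMod N)) = n • (p : ZMod N)
      rw [smul_comm, zsmul_eq_mul, zsmul_eq_mul, nsmul_eq_mul, mul_one]
  have hcr : Nat.card φ.range = p ^ (a - 1) := by
    rw [hrange, Nat.card_zmultiples, ZMod.addOrderOf_coe p (NeZero.ne N)]
    rw [hN, Nat.gcd_eq_right (dvd_pow_self p (by omega))]
    have h2 : p ^ a = p ^ (a - 1) * p := by rw [← pow_succ]; congr 1; omega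
    rw [h2, Nat.mul_div_cancel _ hp.pos]
  have hker : Nat.card φ.ker = p := by
    have h1 : Nat.card (ZMod N) = Nat.card (ZMod N ⧸ φ.ker) * Nat.card φ.ker :=
      (AddSubgroup.card_eq_card_quotient_mul_card_addSubgroup φ.ker)
    rw [Nat.card_zmod, Nat.card_congr (QuotientAddGroup.quotientKerEquivRange φ).toEquiv, hcr] at h1
    have hpa : N = p ^ (a - 1) * p := by
      rw [hN, ← pow_succ]; congr 1; omega
    have h3 : p ^ (a - 1) * p = p ^ (a - 1) * Nat.card φ.ker := hpa ▸ h1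
    exact (Nat.eq_of_mul_eq_mul_left (pow_pos hp.pos _) h3).symm
  have hsub : Nat.card {x : ZMod N // p • x = 0} = Nat.card φ.ker :=
    Nat.card_congr (Equiv.subtypeEquivRight fun x =>
      (show x ∈ φ.ker ↔ p • x = 0 from AddMonoidHom.mem_ker)).symm
  rw [hsub, hker]

/-- the additive equiv underlying `DFinsupp.equivFunOnFintype` -/
def dfinsuppAddEquiv {ι : Type} [Fintype ι] (β : ι → Type*) [∀ i, AddCommGroup (β i)] :
    DirectSum ι β ≃+ ∀ i, β i :=
  { DFinsupp.equivFunOnFintype with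
    map_add' := fun f g => funext fun i => by simp [DFinsupp.equivFunOnFintype] }

theorem freeify {B : Type*} [AddCommGroup B] {p e m : ℕ} (hp : p.Prime) (he : 1 ≤ e)
    (hcard : Nat.card B = p ^ (m * e)) (hexp : ∀ x : B, p ^ e • x = 0)
    (htor : Nat.card {x : B // p • x = 0} = p ^ m) :
    Nonempty (B ≃+ (Fin m → ZMod (p ^ e))) := by
  have hBfin : Finite B := Nat.finite_of_card_ne_zero (by
    rw [hcard]; exact pow_ne_zero _ hp.ne_zero)
  obtain ⟨ι, hι, n, hn1, ⟨ψ⟩⟩ := AddCommGroup.equiv_directSum_zmod_of_finite' B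
  classical
  set Ψ : B ≃+ ∀ i, ZMod (n i) := ψ.trans (dfinsuppAddEquiv _) with hΨ
  have hdvd : ∀ i, n i ∣ p ^ e := by
    intro i
    haveI : NeZero (n i) := ⟨by have := hn1 i; omega⟩
    have h1 := hexp (Ψ.symm (Pi.single i 1))
    have h2 : (p ^ e) • (Pi.single i (1 : ZMod (n i)) : ∀ j, ZMod (n j)) = 0 := by
      have h4 := congrArg Ψ h1
      rwa [map_nsmul, AddEquiv.apply_symm_apply, map_zero] at h4
    have h3 := congrFun h2 i
    rw [Pi.smul_apply, Pi.single_eq_same, Pi.zero_apply, nsmul_eq_mul, mul_one] at h3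
    exact (ZMod.natCast_eq_zero_iff _ _).mp h3
  have hax : ∀ i, ∃ a : ℕ, a ≤ e ∧ n i = p ^ a := fun i => (Nat.dvd_prime_pow hp).mp (hdvd i)
  choose a hae han using hax
  have ha1 : ∀ i, 1 ≤ a i := fun i => by
    rcases Nat.eq_zero_or_pos (a i) with h | h
    · exfalso; have h5 := hn1 i; rw [han i, h, pow_zero] at h5; omega
    · exact h
  have hcard2 : ∏ i, (p : ℕ) ^ a i = p ^ (m * e) := by
    rw [← hcard, Nat.card_congr Ψ.toEquiv, Nat.card_pi]
    exact (Finset.prod_congr rfl fun i _ => by rw [Nat.card_zmod, han]).symm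
  rw [Finset.prod_pow_eq_pow_sum] at hcard2
  have hsum : ∑ i, a i = m * e := Nat.pow_right_injective hp.two_le hcard2
  have htor2 : Nat.card {x : B // p • x = 0} = p ^ (Fintype.card ι) := by
    have e1 : {x : B // p • x = 0} ≃ {v : ∀ i, ZMod (n i) // p • v = 0} :=
      Ψ.toEquiv.subtypeEquiv fun x => by
        change p • x = 0 ↔ p • Ψ x = 0
        constructor
        · intro h; rw [← map_nsmul, h, map_zero]
        · intro h; apply Ψ.injective; rw [map_nsmul, h, map_zero]
    have e2 : {v : ∀ i, ZMod (n i) // p • v = 0} ≃ {v : ∀ i, ZMod (n i) // ∀ i, p • v i = 0} :=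
      Equiv.subtypeEquivRight fun v => by
        constructor
        · intro h i; rw [← Pi.smul_apply, h]; rfl
        · intro h; funext i; exact h i
    have e3 : {v : ∀ i, ZMod (n i) // ∀ i, p • v i = 0} ≃ ∀ i, {x : ZMod (n i) // p • x = 0} :=
      Equiv.subtypePiEquivPi (p := fun i (x : ZMod (n i)) => p • x = 0)
    rw [Nat.card_congr ((e1.trans e2).trans e3), Nat.card_pi]
    have hfac : ∀ i : ι, Nat.card {x : ZMod (n i) // p • x = 0} = p := fun i => by
      rw [han i]; exact card_zmod_tor hp (a i) (ha1 i)
    rw [Finset.prod_congr rfl fun i _ => hfac i, Finset.prod_const, Finset.card_univ]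
  have hcι : Fintype.card ι = m := by
    rw [htor] at htor2
    exact (Nat.pow_right_injective hp.two_le htor2).symm
  have hai : ∀ i, a i = e := by
    by_contra h
    push_neg at h
    obtain ⟨j, hj⟩ := h
    have hlt : ∑ i, a i < ∑ _i : ι, e :=
      Finset.sum_lt_sum (fun i _ => hae i) ⟨j, Finset.mem_univ j, lt_of_le_of_ne (hae j) hj⟩
    rw [hsum, Finset.sum_const, Finset.card_univ, hcι, smul_eq_mul] at hlt
    omega
  refine ⟨Ψ.trans <| (AddEquiv.piCongrRight fun i =>
    (ZMod.ringEquivCongr (by rw [han i, hai i])).toAddEquiv).trans ?_⟩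
  exact
    { toFun := fun v j => v ((Fintype.equivFinOfCardEq hcι).symm j)
      invFun := fun w i => w (Fintype.equivFinOfCardEq hcι i)
      left_inv := fun v => by funext i; simp
      right_inv := fun w => by funext j; simp
      map_add' := fun v w => rfl }

theorem heart (p : ℕ) [Fact p.Prime] (m e : ℕ) (hm : 0 < m) :
    Nonempty ((WittVector p (GaloisField p m) ⧸
      (Dsub' e : AddSubgroup (WittVector p (GaloisField p m)))) ≃+ (Fin m → ZMod (p ^ e))) := by
  have hpp := (Fact.out : p.Prime)
  rcases Nat.eq_zero_or_pos e with he | he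
  · subst he
    haveI hsq : Subsingleton (WittVector p (GaloisField p m) ⧸
        (Dsub' 0 : AddSubgroup (WittVector p (GaloisField p m)))) := by
      have h0 : (Dsub' 0 : AddSubgroup (WittVector p (GaloisField p m))) = ⊤ := by
        ext x; simp [mem_Dsub']
      rw [h0]; exact QuotientAddGroup.subsingleton_quotient_top
    haveI : Subsingleton (ZMod (p ^ 0)) := by rw [pow_zero]; infer_instance
    exact ⟨AddEquiv.mk' (equivOfSubsingletonOfSubsingleton (fun _ => 0) (fun _ => 0))
      (fun _ _ => Subsingleton.elim _ _)⟩
  · apply freeify hpp he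
    · rw [card_quot, GaloisField.card p m hm.ne', ← pow_mul]
    · exact quot_exponent e
    · rw [card_tor e he, GaloisField.card p m hm.ne']

end HeisAux

set_option maxHeartbeats 1000000 in
/-- Let `W_i = W(𝔽_{p^{f_i}})` and `R = W_1 × ⋯ × W_g`. For an additive subgroup
`Λ ≤ R ⊕ R` of finite index, with `ε_i(Λ)` the largest `e` such that the projection
of `Λ` to `W_i ⊕ W_i` is contained in `p^e(W_i ⊕ W_i)`, the additive subgroup of `R`
generated by `{a·b' - a'·b : (a,b) ∈ Λ, (a',b') ∈ R ⊕ R}` equals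
`p^{ε_1}W_1 × ⋯ × p^{ε_g}W_g`, and the quotient of `R` by it is isomorphic to
`∏_{i=1}^g (ℤ/p^{ε_i}ℤ)^{f_i}` as an abelian group. -/
theorem heisenberg_commutator_lattice (p : ℕ) [Fact p.Prime] (g : ℕ) (f : Fin g → ℕ)
    (hf : ∀ i, 0 < f i)
    (Λ : AddSubgroup ((∀ i : Fin g, WittVector p (GaloisField p (f i))) ×
      (∀ i : Fin g, WittVector p (GaloisField p (f i)))))
    (hΛ : Λ.FiniteIndex) (ε : Fin g → ℕ)
    (hε : ∀ i : Fin g,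
      (∀ x ∈ Λ, ∃ y : WittVector p (GaloisField p (f i)) × WittVector p (GaloisField p (f i)),
        p ^ ε i • y = (x.1 i, x.2 i)) ∧
      ¬ (∀ x ∈ Λ, ∃ y : WittVector p (GaloisField p (f i)) × WittVector p (GaloisField p (f i)),
        p ^ (ε i + 1) • y = (x.1 i, x.2 i))) :
    (∀ z : ∀ i : Fin g, WittVector p (GaloisField p (f i)),
      z ∈ AddSubgroup.closure {z : ∀ i : Fin g, WittVector p (GaloisField p (f i)) |
          ∃ x ∈ Λ, ∃ y : (∀ i : Fin g, WittVector p (GaloisField p (f i))) ×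
            (∀ i : Fin g, WittVector p (GaloisField p (f i))),
            z = x.1 * y.2 - y.1 * x.2} ↔
        ∀ i : Fin g, ∃ w : WittVector p (GaloisField p (f i)), p ^ ε i • w = z i) ∧
    Nonempty (((∀ i : Fin g, WittVector p (GaloisField p (f i))) ⧸
        AddSubgroup.closure {z : ∀ i : Fin g, WittVector p (GaloisField p (f i)) |
          ∃ x ∈ Λ, ∃ y : (∀ i : Fin g, WittVector p (GaloisField p (f i))) ×
            (∀ i : Fin g, WittVector p (GaloisField p (f i))),
            z = x.1 * y.2 - y.1 * x.2}) ≃+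
      ∀ i : Fin g, Fin (f i) → ZMod (p ^ ε i)) := by
  classical
  have hpp : p.Prime := Fact.out
  set T : AddSubgroup (∀ i : Fin g, WittVector p (GaloisField p (f i))) :=
    AddSubgroup.pi Set.univ (fun i => HeisAux.Dsub' (ε i)) with hT
  have hST : AddSubgroup.closure {z : ∀ i : Fin g, WittVector p (GaloisField p (f i)) |
      ∃ x ∈ Λ, ∃ y : (∀ i : Fin g, WittVector p (GaloisField p (f i))) ×
        (∀ i : Fin g, WittVector p (GaloisField p (f i))),
        z = x.1 * y.2 - y.1 * x.2} = T := by
    apply le_antisymm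
    · rw [AddSubgroup.closure_le]
      rintro z ⟨x, hx, y, rfl⟩
      intro i _
      obtain ⟨c, hc⟩ := (hε i).1 x hx
      have e1 : x.1 i = (p : WittVector p (GaloisField p (f i))) ^ ε i * c.1 := by
        have h1 := congrArg Prod.fst hc
        rw [Prod.smul_fst, nsmul_eq_mul] at h1
        push_cast at h1
        exact h1.symm
      have e2 : x.2 i = (p : WittVector p (GaloisField p (f i))) ^ ε i * c.2 := by
        have h1 := congrArg Prod.snd hc
        rw [Prod.smul_snd, nsmul_eq_mul] at h1
        push_cast at h1
        exact h1.symm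
      refine ⟨c.1 * y.2 i - y.1 i * c.2, ?_⟩
      show x.1 i * y.2 i - y.1 i * x.2 i = _
      rw [e1, e2]; ring
    · intro z hz
      have hdvd : ∀ i, (p : WittVector p (GaloisField p (f i))) ^ ε i ∣ z i :=
        fun i => hz i (Set.mem_univ i)
      choose w hw using hdvd
      have hz2 : z = ∑ i, Pi.single i (z i) := (Finset.univ_sum_single z).symm
      rw [hz2]
      apply AddSubgroup.sum_mem
      intro i _
      obtain ⟨hA, hB⟩ := hε i
      push_neg at hB
      obtain ⟨x, hx, hnx⟩ := hB
      obtain ⟨c, hc⟩ := hA x hx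
      have e1 : x.1 i = (p : WittVector p (GaloisField p (f i))) ^ ε i * c.1 := by
        have h1 := congrArg Prod.fst hc
        rw [Prod.smul_fst, nsmul_eq_mul] at h1
        push_cast at h1
        exact h1.symm
      have e2 : x.2 i = (p : WittVector p (GaloisField p (f i))) ^ ε i * c.2 := by
        have h1 := congrArg Prod.snd hc
        rw [Prod.smul_snd, nsmul_eq_mul] at h1
        push_cast at h1
        exact h1.symm
      have hunit : IsUnit c.1 ∨ IsUnit c.2 := by
        by_contra hcon
        push_neg at hcon
        have d1 : (p : WittVector p (GaloisField p (f i))) ∣ c.1 := by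
          rw [← pow_one (p : WittVector p (GaloisField p (f i))), HeisAux.pow_p_dvd_iff]
          intro j hj
          have hj0 : j = 0 := by omega
          subst hj0
          by_contra hne
          exact hcon.1 (WittVector.isUnit_of_coeff_zero_ne_zero c.1 hne)
        have d2 : (p : WittVector p (GaloisField p (f i))) ∣ c.2 := by
          rw [← pow_one (p : WittVector p (GaloisField p (f i))), HeisAux.pow_p_dvd_iff]
          intro j hj
          have hj0 : j = 0 := by omega
          subst hj0
          by_contra hne
          exact hcon.2 (WittVector.isUnit_of_coeff_zero_ne_zero c.2 hne)
        obtain ⟨a', ha'⟩ := d1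
        obtain ⟨b', hb'⟩ := d2
        refine hnx (a', b') ?_
        have : (p ^ (ε i + 1)) • ((a', b') :
            WittVector p (GaloisField p (f i)) × WittVector p (GaloisField p (f i)))
            = (p ^ (ε i + 1) • a', p ^ (ε i + 1) • b') := rfl
        rw [this, Prod.mk.injEq]
        constructor
        · rw [nsmul_eq_mul]; push_cast
          rw [e1, ha']; ring
        · rw [nsmul_eq_mul]; push_cast
          rw [e2, hb']; ring
      apply AddSubgroup.subset_closure
      obtain hu | hu := hunit
      · obtain ⟨v, hv⟩ := hu.exists_right_inv
        refine ⟨x, hx, (0, Pi.single i (v * w i)), ?_⟩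
        funext j
        simp only [Pi.sub_apply, Pi.mul_apply, Pi.zero_apply]
        by_cases hji : j = i
        · subst hji
          rw [Pi.single_eq_same, Pi.single_eq_same, e1, hw j, zero_mul, sub_zero]
          calc (p : WittVector p (GaloisField p (f j))) ^ ε j * w j
              = (p : WittVector p (GaloisField p (f j))) ^ ε j * (c.1 * v) * w j := by
                rw [hv, mul_one]
            _ = (p : WittVector p (GaloisField p (f j))) ^ ε j * c.1 * (v * w j) := by ring
        · rw [Pi.single_eq_of_ne hji, Pi.single_eq_of_ne hji, mul_zero, zero_mul, sub_zero]
      · obtain ⟨v, hv⟩ := hu.exists_right_inv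
        refine ⟨x, hx, (Pi.single i (-(v * w i)), 0), ?_⟩
        funext j
        simp only [Pi.sub_apply, Pi.mul_apply, Pi.zero_apply]
        by_cases hji : j = i
        · subst hji
          rw [Pi.single_eq_same, Pi.single_eq_same, e2, hw j, mul_zero, zero_sub]
          calc (p : WittVector p (GaloisField p (f j))) ^ ε j * w j
              = (p : WittVector p (GaloisField p (f j))) ^ ε j * (c.2 * v) * w j := by
                rw [hv, mul_one]
            _ = -(-(v * w j) * ((p : WittVector p (GaloisField p (f j))) ^ ε j * c.2)) := by ring
        · rw [Pi.single_eq_of_ne hji, Pi.single_eq_of_ne hji, mul_zero, zero_mul, zero_sub,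
            neg_zero]
  constructor
  · intro z
    rw [hST]
    constructor
    · intro h i
      exact (HeisAux.smul_iff_dvd _ _).mpr ((AddSubgroup.mem_pi Set.univ).mp h i (Set.mem_univ i))
    · intro h
      exact (AddSubgroup.mem_pi Set.univ).mpr fun i _ => (HeisAux.smul_iff_dvd _ _).mp (h i)
  · set Φ : (∀ i : Fin g, WittVector p (GaloisField p (f i))) →+
        (∀ i : Fin g, WittVector p (GaloisField p (f i)) ⧸
          (HeisAux.Dsub' (ε i) : AddSubgroup (WittVector p (GaloisField p (f i))))) :=
      { toFun := fun x i => QuotientAddGroup.mk (x i)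
        map_zero' := rfl
        map_add' := fun x y => rfl } with hΦ
    have hker : Φ.ker = T := by
      ext x
      rw [AddMonoidHom.mem_ker]
      constructor
      · intro h
        exact (AddSubgroup.mem_pi Set.univ).mpr fun i _ =>
          (QuotientAddGroup.eq_zero_iff (x i)).mp (congrFun h i)
      · intro h
        funext i
        exact (QuotientAddGroup.eq_zero_iff (x i)).mpr ((AddSubgroup.mem_pi Set.univ).mp h i (Set.mem_univ i))
    have hsurj : Function.Surjective Φ := by
      intro q
      have : ∀ i, ∃ y, QuotientAddGroup.mk y = q i := fun i => QuotientAddGroup.mk_surjective (q i)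
      choose x hx using this
      exact ⟨x, funext hx⟩
    have equiv1 := QuotientAddGroup.quotientKerEquivOfSurjective Φ hsurj
    have equiv0 := QuotientAddGroup.quotientAddEquivOfEq (hST.trans hker.symm)
    exact ⟨equiv0.trans (equiv1.trans (AddEquiv.piCongrRight fun i =>
      (HeisAux.heart p (f i) (ε i) (hf i)).some))⟩
end

section
/- Let g ∈ ℕ, e = (e_1,…,e_g) ∈ ℕ^g, f = (f_1,…,f_g) ∈ ℕ^g, n = ∑_{i=1}^g e_i f_i, and C_i = ∑_{j≤i} e_j f_j (C_0 = 0). Let Adm_{e,f} ⊆ ℕ_0^n be the set of tuples ℓ such that for every i ∈ {1,…,g} there exist δ_i ∈ {0,…,e_i−1} and m_i ∈ ℕ_0 with ℓ_j = m_i + 1 for C_{i−1} < j ≤ C_{i−1}+δ_i f_i and ℓ_j = m_i for C_{i−1}+δ_i f_i < j ≤ C_i. Then in ℚ[[t]]: ∑_{ℓ ∈ Adm_{e,f}} t^{2(ℓ_1+⋯+ℓ_n)} = ∏_{i=1}^g (1 − t^{2f_i})^{−1} (each coefficient of t^k on the left is a finite sum, and each factor on the right is expanded as a geometric series). -/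
private lemma adm_geom_inv (d : ℕ) (hd : 0 < d) :
    (1 - PowerSeries.X ^ d : PowerSeries ℚ)⁻¹ =
      PowerSeries.mk fun k => if d ∣ k then (1 : ℚ) else 0 := by
  symm
  rw [PowerSeries.eq_inv_iff_mul_eq_one (by simp [hd.ne'])]
  ext k
  rw [mul_sub, mul_one, map_sub, PowerSeries.coeff_mul_X_pow']
  simp only [PowerSeries.coeff_mk, PowerSeries.coeff_one]
  by_cases hdk : d ∣ k
  · rcases eq_or_ne k 0 with rfl | hk
    · simp [Nat.not_succ_le_zero, hd.ne', Nat.le_zero]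
    · have hlk : d ≤ k := Nat.le_of_dvd (Nat.pos_of_ne_zero hk) hdk
      have h2 : d ∣ k - d := Nat.dvd_sub hdk dvd_rfl
      simp [hdk, hlk, h2, hk]
  · have hk : k ≠ 0 := by rintro rfl; exact hdk (dvd_zero d)
    have h3 : d ≤ k → ¬ d ∣ k - d := fun hlk hc => hdk (by
      have h4 := Nat.dvd_add hc (dvd_refl d)
      rwa [Nat.sub_add_cancel hlk] at h4)
    by_cases hlk : d ≤ k
    · simp [hdk, hlk, h3 hlk, hk]
    · simp [hdk, hlk, hk]

private def CfA (e f : ℕ → ℕ) (i : ℕ) : ℕ := ∑ c ∈ Finset.Icc 1 i, e c * f c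

private lemma CfA_mono (e f : ℕ → ℕ) : Monotone (CfA e f) := fun _ _ hij =>
  Finset.sum_le_sum_of_subset (Finset.Icc_subset_Icc_right hij)

private lemma CfA_zero (e f : ℕ → ℕ) : CfA e f 0 = 0 := by simp [CfA]

private lemma CfA_step (e f : ℕ → ℕ) (i : ℕ) (hi : 1 ≤ i) :
    CfA e f i = CfA e f (i - 1) + e i * f i := by
  obtain ⟨i', rfl⟩ : ∃ i', i = i' + 1 := ⟨i - 1, by omega⟩
  simp only [CfA, Nat.add_sub_cancel]
  exact Finset.sum_Icc_succ_top (by omega) _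

private lemma adm_sum_blocks (C : ℕ → ℕ) (hC : Monotone C) (ℓ : ℕ → ℕ) (g : ℕ) :
    ∑ i ∈ Finset.Icc 1 g, ∑ j ∈ Finset.Ioc (C (i - 1)) (C i), ℓ j
      = ∑ j ∈ Finset.Ioc (C 0) (C g), ℓ j := by
  induction g with
  | zero => simp
  | succ g ih =>
    rw [Finset.sum_Icc_succ_top (by omega : 1 ≤ g + 1), ih]
    have hd : Disjoint (Finset.Ioc (C 0) (C g)) (Finset.Ioc (C g) (C (g + 1))) := by
      rw [Finset.disjoint_left]
      intro a ha hb
      simp only [Finset.mem_Ioc] at ha hb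
      omega
    rw [Nat.add_sub_cancel, ← Finset.sum_union hd,
      Finset.Ioc_union_Ioc_eq_Ioc (hC (Nat.zero_le g)) (hC (Nat.le_succ g))]

private lemma sum_Ioc_const_split (ℓ : ℕ → ℕ) (a b df m : ℕ) (h1 : a + df ≤ b)
    (hup : ∀ j, a < j → j ≤ a + df → ℓ j = m + 1)
    (hlo : ∀ j, a + df < j → j ≤ b → ℓ j = m) :
    ∑ j ∈ Finset.Ioc a b, ℓ j = (b - a) * m + df := by
  have hd : Disjoint (Finset.Ioc a (a + df)) (Finset.Ioc (a + df) b) := by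
    rw [Finset.disjoint_left]
    intro x hx hy
    simp only [Finset.mem_Ioc] at hx hy
    omega
  rw [← Finset.Ioc_union_Ioc_eq_Ioc (Nat.le_add_right a df) h1, Finset.sum_union hd,
    Finset.sum_congr rfl (fun j hj => hup j (Finset.mem_Ioc.mp hj).1 (Finset.mem_Ioc.mp hj).2),
    Finset.sum_congr rfl (fun j hj => hlo j (Finset.mem_Ioc.mp hj).1 (Finset.mem_Ioc.mp hj).2),
    Finset.sum_const, Finset.sum_const, Nat.card_Ioc, Nat.card_Ioc, smul_eq_mul, smul_eq_mul]
  have e2 : b - (a + df) = b - a - df := by omega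
  have e4 : df * m ≤ (b - a) * m := Nat.mul_le_mul_right m (by omega)
  rw [Nat.add_sub_cancel_left, e2, Nat.sub_mul, Nat.mul_succ]
  omega

private def blockValA (C e f s : ℕ → ℕ) (g j : ℕ) : ℕ :=
  ∑ i ∈ Finset.Icc 1 g, if C (i - 1) < j ∧ j ≤ C i
    then s i / e i + (if j ≤ C (i - 1) + (s i % e i) * f i then 1 else 0) else 0

private lemma blockValA_eq (C e f s : ℕ → ℕ) (g j i : ℕ) (hC : Monotone C)
    (hi : i ∈ Finset.Icc 1 g) (hj1 : C (i - 1) < j) (hj2 : j ≤ C i) :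
    blockValA C e f s g j =
      s i / e i + (if j ≤ C (i - 1) + (s i % e i) * f i then 1 else 0) := by
  rw [blockValA, Finset.sum_eq_single_of_mem i hi, if_pos ⟨hj1, hj2⟩]
  intro b hb hne
  rw [if_neg]
  rintro ⟨h1, h2⟩
  simp only [Finset.mem_Icc] at hb hi
  rcases Nat.lt_or_ge b i with h | h
  · exact absurd hj1 (not_lt.mpr (h2.trans (hC (by omega : b ≤ i - 1))))
  · have hib : i ≤ b - 1 := by omega
    exact absurd h1 (not_lt.mpr (hj2.trans (hC hib)))

private lemma blockValA_zero (C e f s : ℕ → ℕ) (g j : ℕ) (hC : Monotone C)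
    (hj : j = 0 ∨ C g < j) : blockValA C e f s g j = 0 := by
  rw [blockValA]
  apply Finset.sum_eq_zero
  intro i hi
  rw [if_neg]
  rintro ⟨h1, h2⟩
  simp only [Finset.mem_Icc] at hi
  rcases hj with rfl | hj
  · exact absurd h1 (Nat.not_lt_zero _)
  · exact absurd hj (not_lt.mpr (h2.trans (hC hi.2)))

private lemma adm_exists_block (C : ℕ → ℕ) (g j : ℕ) (h0 : C 0 < j) (hg : j ≤ C g) :
    ∃ i, 1 ≤ i ∧ i ≤ g ∧ C (i - 1) < j ∧ j ≤ C i := by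
  induction g with
  | zero => exact absurd hg (not_le.mpr h0)
  | succ g ih =>
    by_cases h : j ≤ C g
    · obtain ⟨i, hi1, hi2, hi3, hi4⟩ := ih h
      exact ⟨i, hi1, by omega, hi3, hi4⟩
    · exact ⟨g + 1, by omega, le_refl _, by simpa using not_le.mp h, hg⟩

private lemma adm_block_sum (e f : ℕ → ℕ) (ℓ : ℕ → ℕ) (i δ m : ℕ) (hδ : δ < e i)
    (hm1 : ∀ j, CfA e f (i - 1) < j → j ≤ CfA e f (i - 1) + δ * f i → ℓ j = m + 1)
    (hm2 : ∀ j, CfA e f (i - 1) + δ * f i < j → j ≤ CfA e f i → ℓ j = m)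
    (hi : 1 ≤ i) :
    ∑ j ∈ Finset.Ioc (CfA e f (i - 1)) (CfA e f i), ℓ j = e i * f i * m + δ * f i := by
  have hstep := CfA_step e f i hi
  have hle : δ * f i ≤ e i * f i := Nat.mul_le_mul_right _ (le_of_lt hδ)
  have h1 : CfA e f (i - 1) + δ * f i ≤ CfA e f i := by omega
  rw [sum_Ioc_const_split ℓ _ _ _ _ h1 hm1 hm2, hstep, Nat.add_sub_cancel_left]

private lemma recon_props (g : ℕ) (e f : ℕ → ℕ) (he : ∀ i ∈ Finset.Icc 1 g, 0 < e i)
    (s : ℕ → ℕ) (i : ℕ) (hi : i ∈ Finset.Icc 1 g) :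
    (∀ j, CfA e f (i - 1) < j → j ≤ CfA e f (i - 1) + (s i % e i) * f i →
        blockValA (CfA e f) e f s g j = s i / e i + 1) ∧
    (∀ j, CfA e f (i - 1) + (s i % e i) * f i < j → j ≤ CfA e f i →
        blockValA (CfA e f) e f s g j = s i / e i) := by
  have hi1 : 1 ≤ i := (Finset.mem_Icc.mp hi).1
  have hδ : s i % e i < e i := Nat.mod_lt _ (he i hi)
  have hstep := CfA_step e f i hi1
  have hle : (s i % e i) * f i ≤ e i * f i := Nat.mul_le_mul_right _ (le_of_lt hδ)
  constructor
  · intro j h1 h2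
    have h3 : j ≤ CfA e f i := by omega
    rw [blockValA_eq (CfA e f) e f s g j i (CfA_mono e f) hi h1 h3, if_pos h2]
  · intro j h1 h2
    have h1' : CfA e f (i - 1) < j := lt_of_le_of_lt (Nat.le_add_right _ _) h1
    rw [blockValA_eq (CfA e f) e f s g j i (CfA_mono e f) hi h1' h2,
      if_neg (not_le.mpr h1), add_zero]

private lemma recon_block_sum (g : ℕ) (e f : ℕ → ℕ) (he : ∀ i ∈ Finset.Icc 1 g, 0 < e i)
    (s : ℕ → ℕ) (i : ℕ) (hi : i ∈ Finset.Icc 1 g) :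
    ∑ j ∈ Finset.Ioc (CfA e f (i - 1)) (CfA e f i), blockValA (CfA e f) e f s g j
      = f i * s i := by
  obtain ⟨h1, h2⟩ := recon_props g e f he s i hi
  rw [adm_block_sum e f _ i (s i % e i) (s i / e i) (Nat.mod_lt _ (he i hi)) h1 h2
    (Finset.mem_Icc.mp hi).1]
  calc e i * f i * (s i / e i) + (s i % e i) * f i
      = f i * (e i * (s i / e i) + s i % e i) := by ring
    _ = f i * s i := by rw [Nat.div_add_mod]

private noncomputable def admToFun (g : ℕ) (e f : ℕ → ℕ) (ℓ : ℕ → ℕ) : ℕ →₀ ℕ :=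
  Finsupp.onFinset (Finset.Icc 1 g)
    (fun i => if i ∈ Finset.Icc 1 g
      then 2 * ∑ j ∈ Finset.Ioc (CfA e f (i - 1)) (CfA e f i), ℓ j else 0)
    (fun i h => by by_contra hc; exact h (if_neg hc))

private lemma admToFun_apply (g : ℕ) (e f ℓ : ℕ → ℕ) (i : ℕ) (hi : i ∈ Finset.Icc 1 g) :
    admToFun g e f ℓ i = 2 * ∑ j ∈ Finset.Ioc (CfA e f (i - 1)) (CfA e f i), ℓ j := by
  rw [admToFun, Finsupp.onFinset_apply, if_pos hi]

private lemma admToFun_apply_not (g : ℕ) (e f ℓ : ℕ → ℕ) (i : ℕ) (hi : i ∉ Finset.Icc 1 g) :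
    admToFun g e f ℓ i = 0 := by
  rw [admToFun, Finsupp.onFinset_apply, if_neg hi]

private def admInvFun (g : ℕ) (e f : ℕ → ℕ) (l : ℕ → ℕ) : ℕ → ℕ :=
  blockValA (CfA e f) e f (fun i => l i / (2 * f i)) g

/-- For a decomposition type `(e, f)` with `n = ∑ e_i f_i` and `C_i = ∑_{j≤i} e_j f_j`,
the generating function of the admissible `n`-tuples satisfies
`∑_{ℓ ∈ Adm_{e,f}} t^{2(ℓ_1+⋯+ℓ_n)} = ∏_{i=1}^g (1 - t^{2f_i})⁻¹` in `ℚ[[t]]`. -/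
theorem adm_generating_function (g : ℕ) (hg : 0 < g) (e f : ℕ → ℕ)
    (he : ∀ i ∈ Finset.Icc 1 g, 0 < e i) (hf : ∀ i ∈ Finset.Icc 1 g, 0 < f i)
    (n : ℕ) (hn : n = ∑ i ∈ Finset.Icc 1 g, e i * f i) :
    (PowerSeries.mk fun k =>
        (Nat.card {ℓ : ℕ → ℕ // IsTuple n ℓ ∧
          (∀ i ∈ Finset.Icc 1 g, ∃ δ < e i, ∃ m : ℕ,
            (∀ j, (∑ c ∈ Finset.Icc 1 (i - 1), e c * f c) < j →
              j ≤ (∑ c ∈ Finset.Icc 1 (i - 1), e c * f c) + δ * f i → ℓ j = m + 1) ∧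
            (∀ j, (∑ c ∈ Finset.Icc 1 (i - 1), e c * f c) + δ * f i < j →
              j ≤ ∑ c ∈ Finset.Icc 1 i, e c * f c → ℓ j = m)) ∧
          2 * (∑ j ∈ Finset.Icc 1 n, ℓ j) = k} : ℚ)) =
      ∏ i ∈ Finset.Icc 1 g, (1 - PowerSeries.X ^ (2 * f i) : PowerSeries ℚ)⁻¹ := by
  classical
  have hCg : CfA e f g = n := hn.symm
  have hIoc : Finset.Ioc (CfA e f 0) (CfA e f g) = Finset.Icc 1 n := by
    rw [CfA_zero, hCg, ← Finset.Icc_add_one_left_eq_Ioc, Nat.zero_add]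
  ext k
  rw [PowerSeries.coeff_mk,
    Finset.prod_congr rfl
      (fun i hi => adm_geom_inv (2 * f i) (by have := hf i hi; omega)),
    PowerSeries.coeff_prod]
  simp only [PowerSeries.coeff_mk]
  rw [Finset.sum_congr rfl fun l _ => Finset.prod_boole, Finset.sum_boole]
  norm_cast
  rw [← Nat.card_eq_finsetCard]
  apply Nat.card_congr
  exact
    { toFun := fun ℓ => ⟨admToFun g e f ℓ.1, by
        obtain ⟨ℓ, hT, hadm, hsum⟩ := ℓ
        rw [Finset.mem_filter, Finset.mem_finsuppAntidiag]
        refine ⟨⟨?_, Finsupp.support_onFinset_subset⟩, ?_⟩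
        · calc ∑ i ∈ Finset.Icc 1 g, admToFun g e f ℓ i
              = ∑ i ∈ Finset.Icc 1 g,
                  2 * ∑ j ∈ Finset.Ioc (CfA e f (i - 1)) (CfA e f i), ℓ j :=
                Finset.sum_congr rfl fun i hi => admToFun_apply g e f ℓ i hi
            _ = 2 * ∑ j ∈ Finset.Icc 1 n, ℓ j := by
                rw [← Finset.mul_sum, adm_sum_blocks (CfA e f) (CfA_mono e f) ℓ g, hIoc]
            _ = k := hsum
        · intro i hi
          obtain ⟨δ, hδ, m, hm1, hm2⟩ := hadm i hi
          have hB := adm_block_sum e f ℓ i δ m hδ hm1 hm2 (Finset.mem_Icc.mp hi).1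
          rw [admToFun_apply g e f ℓ i hi, hB]
          exact ⟨e i * m + δ, by ring⟩⟩,
      invFun := fun l => ⟨admInvFun g e f l.1, by
        obtain ⟨l, hl⟩ := l
        rw [Finset.mem_filter, Finset.mem_finsuppAntidiag] at hl
        obtain ⟨⟨hsum, hsupp⟩, hdvd⟩ := hl
        refine ⟨?_, ?_, ?_⟩
        · intro j hj
          apply blockValA_zero _ _ _ _ _ _ (CfA_mono e f)
          rcases hj with rfl | hj
          · exact Or.inl rfl
          · exact Or.inr (by rw [hCg]; exact hj)
        · intro i hi
          obtain ⟨h1, h2⟩ := recon_props g e f he (fun i => l i / (2 * f i)) i hi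
          exact ⟨(l i / (2 * f i)) % e i, Nat.mod_lt _ (he i hi),
            (l i / (2 * f i)) / e i, h1, h2⟩
        · calc 2 * ∑ j ∈ Finset.Icc 1 n, admInvFun g e f (⇑l) j
              = 2 * ∑ i ∈ Finset.Icc 1 g, ∑ j ∈ Finset.Ioc (CfA e f (i - 1)) (CfA e f i),
                  admInvFun g e f (⇑l) j := by
                rw [adm_sum_blocks (CfA e f) (CfA_mono e f) _ g, hIoc]
            _ = ∑ i ∈ Finset.Icc 1 g, l i := by
                rw [Finset.mul_sum]
                refine Finset.sum_congr rfl fun i hi => ?_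
                show 2 * ∑ j ∈ Finset.Ioc (CfA e f (i - 1)) (CfA e f i),
                    blockValA (CfA e f) e f (fun i => l i / (2 * f i)) g j = l i
                rw [recon_block_sum g e f he _ i hi, ← mul_assoc]
                exact Nat.mul_div_cancel' (hdvd i hi)
            _ = k := hsum⟩,
      left_inv := fun ℓ => by
        obtain ⟨ℓ, hT, hadm, hsum⟩ := ℓ
        apply Subtype.ext
        funext j
        show admInvFun g e f (⇑(admToFun g e f ℓ)) j = ℓ j
        by_cases hj : 1 ≤ j ∧ j ≤ n
        · obtain ⟨i, hi1, hi2, hj1, hj2⟩ := adm_exists_block (CfA e f) g j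
            (by rw [CfA_zero]; omega) (by rw [hCg]; exact hj.2)
          have hi : i ∈ Finset.Icc 1 g := Finset.mem_Icc.mpr ⟨hi1, hi2⟩
          obtain ⟨δ, hδ, m, hm1, hm2⟩ := hadm i hi
          have hB := adm_block_sum e f ℓ i δ m hδ hm1 hm2 hi1
          have hfpos : 0 < 2 * f i := by have := hf i hi; omega
          have hval : admToFun g e f ℓ i / (2 * f i) = e i * m + δ := by
            rw [admToFun_apply g e f ℓ i hi, hB,
              show 2 * (e i * f i * m + δ * f i) = 2 * f i * (e i * m + δ) by ring]
            exact Nat.mul_div_cancel_left _ hfpos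
          have hepos : 0 < e i := he i hi
          show blockValA (CfA e f) e f (fun i => admToFun g e f ℓ i / (2 * f i)) g j = ℓ j
          rw [blockValA_eq (CfA e f) e f _ g j i (CfA_mono e f) hi hj1 hj2]
          simp only [hval]
          have hmod : (e i * m + δ) % e i = δ := by
            rw [Nat.mul_add_mod, Nat.mod_eq_of_lt hδ]
          have hdiv : (e i * m + δ) / e i = m := by
            rw [Nat.mul_add_div hepos, Nat.div_eq_of_lt hδ, add_zero]
          rw [hmod, hdiv]
          by_cases hsplit : j ≤ CfA e f (i - 1) + δ * f i
          · rw [if_pos hsplit]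
            exact (hm1 j hj1 hsplit).symm
          · rw [if_neg hsplit, add_zero]
            exact (hm2 j (not_le.mp hsplit) hj2).symm
        · have hj' : j = 0 ∨ n < j := by omega
          rw [hT j hj']
          apply blockValA_zero _ _ _ _ _ _ (CfA_mono e f)
          rcases hj' with rfl | h
          · exact Or.inl rfl
          · exact Or.inr (by rw [hCg]; exact h),
      right_inv := fun l => by
        obtain ⟨l, hl⟩ := l
        rw [Finset.mem_filter, Finset.mem_finsuppAntidiag] at hl
        apply Subtype.ext
        show admToFun g e f (admInvFun g e f ⇑l) = l
        ext i
        by_cases hi : i ∈ Finset.Icc 1 g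
        · rw [admToFun_apply g e f _ i hi]
          show 2 * ∑ j ∈ Finset.Ioc (CfA e f (i - 1)) (CfA e f i),
              blockValA (CfA e f) e f (fun i => l i / (2 * f i)) g j = l i
          rw [recon_block_sum g e f he _ i hi, ← mul_assoc]
          exact Nat.mul_div_cancel' (hl.2 i hi)
        · rw [admToFun_apply_not g e f _ i hi]
          by_contra hc
          exact hi (hl.1.2 (Finsupp.mem_support_iff.mpr fun h => hc h.symm)) }
end
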